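/- arXiv:1703.10586 — 14 statements merged into one kernel-verified Lean document; each statement's English description precedes it below -/
import Mathlib

section
/- Let P be a rooted tree poset (unique minimal element, Hasse diagram a tree). Define the linear map T : ℝ^P → ℝ^P by (Tf)(b) = f(b) - f(b̄), where b̄ is the unique element of P̂ covered-below b (with f(0̂) = 0). Then T maps Lip(P) bijectively onto the unit cube [0,1]^P. -/
/-- The Lipschitz polytope of a finite poset `α`. -/
def Lip (α : Type*) [PartialOrder α] : Set (α → ℝ) :=
  {f | (∀ a, IsMin a → 0 ≤ f a ∧ f a ≤ 1) ∧
       ∀ a b : α, a ⋖ b → 0 ≤ f b - f a ∧ f b - f a ≤ 1}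

section Build

variable {α : Type*} [PartialOrder α] [Finite α]

/-- Build the inverse: `build par hpar g b = g b + build ... (par b)`. -/
noncomputable def build (par : α → WithBot α)
    (hpar : ∀ b : α, par b ⋖ (b : WithBot α)) (g : α → ℝ) : α → ℝ :=
  WellFounded.fix wellFounded_lt (fun b ih =>
    g b + (match h : par b with
      | ⊥ => (0 : ℝ)
      | (a : α) => ih a (by
          have hp := (hpar b).lt
          rw [h] at hp
          exact WithBot.coe_lt_coe.mp hp)))

lemma build_eq (par : α → WithBot α)
    (hpar : ∀ b : α, par b ⋖ (b : WithBot α)) (g : α → ℝ) (b : α) :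
    build par hpar g b = g b + WithBot.recBotCoe 0 (build par hpar g) (par b) := by
  conv_lhs => rw [build, WellFounded.fix_eq]
  congr 1
  split <;> rename_i h <;> simp [h, WithBot.recBotCoe, build]

end Build

/-- For a rooted tree `P` (unique minimal element, and every `b ∈ P` has a unique
element `par b` of `P̂ = WithBot P` covered-below it), the linear map
`T f b = f b - f(par b)` (with `f ⊥ = 0`) maps `Lip(P)` bijectively onto `[0,1]^P`. -/
theorem lip_of_rooted_tree {α : Type*} [PartialOrder α] [Fintype α]
    (hroot : ∃! a : α, IsMin a)
    (par : α → WithBot α)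
    (hpar : ∀ b : α, par b ⋖ (b : WithBot α))
    (huniq : ∀ (b : α) (a : WithBot α), a ⋖ (b : WithBot α) → a = par b) :
    Set.BijOn (fun (f : α → ℝ) (b : α) => f b - WithBot.recBotCoe 0 f (par b))
      (Lip α) {g : α → ℝ | ∀ a, 0 ≤ g a ∧ g a ≤ 1} := by
  refine ⟨?_, ?_, ?_⟩
  · -- MapsTo
    rintro f ⟨hmin, hcov⟩ b
    rcases h : par b with _ | a
    · have hp := hpar b
      rw [h] at hp
      have hbmin : IsMin b := WithBot.bot_covBy_coe.mp hp
      simpa [h, WithBot.recBotCoe] using hmin b hbmin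
    · have hp := hpar b
      rw [h] at hp
      have hab : a ⋖ b := WithBot.coe_covBy_coe.mp hp
      simpa [h, WithBot.recBotCoe] using hcov a b hab
  · -- InjOn
    intro f hf g hg hfg
    have key : ∀ b : α, f b = g b := by
      intro b
      induction b using WellFoundedLT.induction with
      | ind b ih =>
        have hb := congrFun hfg b
        simp only at hb
        rcases h : par b with _ | a
        · simpa [h, WithBot.recBotCoe] using hb
        · have hp := (hpar b).lt
          rw [h] at hp
          have hab : a < b := WithBot.coe_lt_coe.mp hp
          rw [h] at hb
          simp only [WithBot.recBotCoe, WithBot.recBotCoe_coe] at hb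
          have := ih a hab
          linarith
    funext b; exact key b
  · -- SurjOn
    intro g hg
    refine ⟨build par hpar g, ⟨?_, ?_⟩, ?_⟩
    · intro a ha
      have hpa : par a = ⊥ := (huniq a ⊥ (WithBot.bot_covBy_coe.mpr ha)).symm
      rw [build_eq, hpa]
      simpa [WithBot.recBotCoe] using hg a
    · intro a b hab
      have hpb : par b = ↑a := (huniq b ↑a (WithBot.coe_covBy_coe.mpr hab)).symm
      rw [build_eq par hpar g b, hpb]
      simpa [WithBot.recBotCoe] using hg b
    · funext b
      simp only
      rw [build_eq]
      rcases h : par b with _ | a <;> simp [h, WithBot.recBotCoe]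
end

section
/- Every integer point of Lip(P) is of the form 1_{F_m} + ... + 1_{F_1} for a unique neighbor-closed chain of nonempty filters F_m ⊂ ... ⊂ F_1 ⊆ P, and conversely every such sum lies in Lip(P). -/
lemma lipCardFilterValLt (m k : ℕ) (h : k ≤ m) :
    (Finset.univ.filter fun i : Fin m => (i : ℕ) < k).card = k := by
  have : (Finset.univ.filter fun i : Fin m => (i : ℕ) < k) =
      Finset.map (Fin.castLEEmb h) Finset.univ := by
    ext i
    simp only [Finset.mem_filter, Finset.mem_univ, true_and, Finset.mem_map]
    constructor
    · intro hi
      exact ⟨⟨(i : ℕ), hi⟩, rfl⟩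
    · rintro ⟨j, -, rfl⟩
      simpa using j.isLt
  rw [this, Finset.card_map, Finset.card_univ, Fintype.card_fin]

lemma lipLowerSetMemIff {m : ℕ} (S : Finset (Fin m))
    (hS : ∀ i j : Fin m, i ≤ j → j ∈ S → i ∈ S) (i : Fin m) :
    i ∈ S ↔ (i : ℕ) < S.card := by
  constructor
  · intro hi
    have hsub : (Finset.univ.filter fun j : Fin m => (j : ℕ) < (i : ℕ) + 1) ⊆ S := by
      intro j hj
      simp only [Finset.mem_filter, Finset.mem_univ, true_and] at hj
      exact hS j i (by omega) hi
    have := Finset.card_le_card hsub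
    rw [lipCardFilterValLt m ((i : ℕ) + 1) i.isLt] at this
    omega
  · intro hi
    by_contra hni
    have hsub : S ⊆ Finset.univ.filter fun j : Fin m => (j : ℕ) < (i : ℕ) := by
      intro j hj
      simp only [Finset.mem_filter, Finset.mem_univ, true_and]
      by_contra hj'
      exact hni (hS i j (by omega) hj)
    have := Finset.card_le_card hsub
    rw [lipCardFilterValLt m (i : ℕ) i.isLt.le] at this
    omega

section PosetHelpers
variable {α : Type*} [PartialOrder α] [Fintype α]

lemma lipReflTransGenCovByOfLe : ∀ b a : α, a ≤ b → Relation.ReflTransGen (· ⋖ ·) a b := by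
  intro b
  induction b using WellFoundedLT.induction with
  | ind b ih =>
    intro a hab
    classical
    rcases eq_or_lt_of_le hab with rfl | hlt
    · exact Relation.ReflTransGen.refl
    · obtain ⟨c, hc, hcmax⟩ : ∃ c ∈ Finset.univ.filter fun c => a ≤ c ∧ c < b,
          ∀ x ∈ Finset.univ.filter fun c => a ≤ c ∧ c < b, ¬ c < x := by
        obtain ⟨c, hc, hmx⟩ := Finset.exists_maximal
          (s := Finset.univ.filter fun c => a ≤ c ∧ c < b) ⟨a, by simp [hab, hlt]⟩
        exact ⟨c, hc, fun x hx hlt' => lt_irrefl _ (lt_of_lt_of_le hlt' (hmx hx hlt'.le))⟩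
      simp only [Finset.mem_filter, Finset.mem_univ, true_and] at hc
      have hcov : c ⋖ b := by
        refine ⟨hc.2, fun d hcd hdb => ?_⟩
        exact hcmax d (by simp [le_trans hc.1 hcd.le, hdb]) hcd
      exact (ih c hc.2 a hc.1).tail hcov

lemma lipExistsMinChain (b : α) :
    ∃ a : α, IsMin a ∧ Relation.ReflTransGen (· ⋖ ·) a b := by
  induction b using WellFoundedLT.induction with
  | ind b ih =>
    classical
    by_cases hb : IsMin b
    · exact ⟨b, hb, Relation.ReflTransGen.refl⟩
    · obtain ⟨c, hcb⟩ := not_isMin_iff.mp hb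
      obtain ⟨d, hd, hdmax⟩ : ∃ d ∈ Finset.univ.filter fun d => d < b,
          ∀ x ∈ Finset.univ.filter fun d => d < b, ¬ d < x := by
        obtain ⟨d, hd, hmx⟩ := Finset.exists_maximal
          (s := Finset.univ.filter fun d => d < b) ⟨c, by simp [hcb]⟩
        exact ⟨d, hd, fun x hx hlt' => lt_irrefl _ (lt_of_lt_of_le hlt' (hmx hx hlt'.le))⟩
      simp only [Finset.mem_filter, Finset.mem_univ, true_and] at hd
      have hcov : d ⋖ b := ⟨hd, fun e hde heb => hdmax e (by simp [heb]) hde⟩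
      obtain ⟨a, ha, hchain⟩ := ih d hd
      exact ⟨a, ha, hchain.tail hcov⟩

omit [Fintype α] in
lemma lipExistsValEq (N : α → ℕ) (hstep : ∀ x y : α, x ⋖ y → N y ≤ N x + 1)
    {a b : α} (h : Relation.ReflTransGen (· ⋖ ·) a b) {k : ℕ}
    (hak : N a ≤ k) (hkb : k ≤ N b) : ∃ c, N c = k := by
  induction h with
  | refl => exact ⟨a, by omega⟩
  | @tail x y hax hxy ih =>
    by_cases hk : k ≤ N x
    · exact ih hk
    · exact ⟨y, by have := hstep x y hxy; omega⟩

end PosetHelpers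

/-- `F : Fin m → Finset α` is a neighbor-closed chain `F 0 ⊃ F 1 ⊃ ⋯` of nonempty
filters: it is a strictly decreasing chain of nonempty upward-closed sets, and for
consecutive members, `a ∉ F i` implies `b ∉ F (i+1)` for covers `a ⋖ b` in `P̂`
(equivalently `F (i+1) ∪ N(F (i+1)) ⊆ F i`; the cover `0̂ ⋖ b` for minimal `b`
forces non-initial members to contain no minimal element of `P`). -/
def IsNCChain {α : Type*} [PartialOrder α] (m : ℕ) (F : Fin m → Finset α) : Prop :=
  (∀ i, (F i).Nonempty) ∧
  (∀ i, ∀ a b : α, a ≤ b → a ∈ F i → b ∈ F i) ∧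
  (∀ i j : Fin m, i < j → F j ⊂ F i) ∧
  (∀ i j : Fin m, (i : ℕ) + 1 = (j : ℕ) →
    ∀ a b : α, a ⋖ b → a ∉ F i → b ∉ F j) ∧
  (∀ i j : Fin m, (i : ℕ) + 1 = (j : ℕ) → ∀ b : α, IsMin b → b ∉ F j)

/-- A point `f ∈ ℝ^P` is an integer point of `Lip(P)` if and only if
`f = 1_{F m} + ⋯ + 1_{F 1}` for a unique neighbor-closed chain of nonempty
filters; i.e. `f a` counts the members of the chain containing `a`. -/
theorem lip_integer_points {α : Type*} [PartialOrder α] [Fintype α] [DecidableEq α]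
    (f : α → ℝ) :
    (f ∈ Lip α ∧ ∀ a, ∃ z : ℤ, f a = (z : ℝ)) ↔
      ∃! C : Σ m : ℕ, Fin m → Finset α,
        IsNCChain C.1 C.2 ∧
        ∀ a : α, f a = ((Finset.univ.filter fun i : Fin C.1 => a ∈ C.2 i).card : ℝ) := by
  classical
  constructor
  · rintro ⟨hf, hz⟩
    -- f is nondecreasing along cover chains
    have hmono : ∀ {x y : α}, Relation.ReflTransGen (· ⋖ ·) x y → f x ≤ f y := by
      intro x y h
      induction h with
      | refl => exact le_refl _
      | @tail u v huv hcov ih =>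
        have := (hf.2 u v hcov).1
        linarith
    have hf0 : ∀ a, 0 ≤ f a := by
      intro a
      obtain ⟨a₀, hmin, hchain⟩ := lipExistsMinChain a
      have h1 := (hf.1 a₀ hmin).1
      have h2 := hmono hchain
      linarith
    -- the natural-number values
    set N : α → ℕ := fun a => ((hz a).choose).toNat with hNdef
    have hN : ∀ a, f a = (N a : ℝ) := by
      intro a
      have hs := (hz a).choose_spec
      have hpos : (0 : ℤ) ≤ (hz a).choose := by
        by_contra h
        push_neg at h
        have : ((hz a).choose : ℝ) < 0 := by exact_mod_cast h
        rw [← hs] at this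
        exact absurd this (not_lt.mpr (hf0 a))
      rw [hs, hNdef]
      exact_mod_cast (Int.toNat_of_nonneg hpos).symm
    have hstep : ∀ x y : α, x ⋖ y → N x ≤ N y ∧ N y ≤ N x + 1 := by
      intro x y hcov
      have h1 := (hf.2 x y hcov).1
      have h2 := (hf.2 x y hcov).2
      rw [hN x, hN y] at h1 h2
      constructor
      · have h3 : (N x : ℝ) ≤ (N y : ℝ) := by linarith
        exact_mod_cast h3
      · have h3 : (N y : ℝ) ≤ (N x : ℝ) + 1 := by linarith
        exact_mod_cast h3
    have hNmono' : ∀ {x y : α}, Relation.ReflTransGen (· ⋖ ·) x y → N x ≤ N y := by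
      intro x y h
      induction h with
      | refl => exact le_refl _
      | @tail u v huv hcov ih => exact le_trans ih (hstep u v hcov).1
    have hNmono : ∀ a b : α, a ≤ b → N a ≤ N b := fun a b hab =>
      hNmono' (lipReflTransGenCovByOfLe b a hab)
    have hNmin : ∀ a : α, IsMin a → N a ≤ 1 := by
      intro a hmin
      have := (hf.1 a hmin).2
      rw [hN a] at this
      exact_mod_cast this
    set m : ℕ := Finset.univ.sup N with hmdef
    have hNle : ∀ a, N a ≤ m := fun a => Finset.le_sup (Finset.mem_univ a)
    set F : Fin m → Finset α := fun i => Finset.univ.filter fun a => (i : ℕ) < N a with hFdef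
    have hmemF : ∀ (i : Fin m) (a : α), a ∈ F i ↔ (i : ℕ) < N a := by
      intro i a; simp [hFdef]
    -- existence of an element achieving any value 1 ≤ k ≤ m
    have hreach : ∀ k : ℕ, 1 ≤ k → k ≤ m → ∃ c, N c = k := by
      intro k hk1 hkm
      have hα : Nonempty α := by
        by_contra h
        have : (Finset.univ : Finset α) = ∅ := by
          simp [Finset.univ_eq_empty_iff.mpr (not_nonempty_iff.mp h)]
        rw [hmdef, this] at hkm
        simp at hkm
        omega
      obtain ⟨a, -, ha⟩ := Finset.exists_mem_eq_sup Finset.univ Finset.univ_nonempty N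
      obtain ⟨a₀, hmin, hchain⟩ := lipExistsMinChain a
      refine lipExistsValEq N (fun x y h => (hstep x y h).2) hchain ?_ ?_
      · have := hNmin a₀ hmin; omega
      · exact hkm.trans (le_of_eq (hmdef.trans ha))
    have hNC : IsNCChain m F := by
      refine ⟨?_, ?_, ?_, ?_, ?_⟩
      · -- nonempty
        intro i
        obtain ⟨c, hc⟩ := hreach ((i : ℕ) + 1) (by omega) i.isLt
        exact ⟨c, (hmemF i c).mpr (by omega)⟩
      · -- upward closed
        intro i a b hab ha
        rw [hmemF] at ha ⊢
        exact lt_of_lt_of_le ha (hNmono a b hab)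
      · -- strict chain
        intro i j hij
        have hij' : (i : ℕ) < (j : ℕ) := hij
        constructor
        · intro a ha
          rw [hmemF] at ha ⊢
          omega
        · intro hsub
          obtain ⟨c, hc⟩ := hreach ((i : ℕ) + 1) (by omega) (by have := j.isLt; omega)
          have hci : c ∈ F i := (hmemF i c).mpr (by omega)
          have := hsub hci
          rw [hmemF] at this
          omega
      · -- neighbor closed
        intro i j hij a b hcov ha
        rw [hmemF] at ha ⊢
        have := (hstep a b hcov).2
        omega
      · -- no minimal elements in later members
        intro i j hij b hmin
        rw [hmemF]
        have := hNmin b hmin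
        omega
    have hvalF : ∀ a : α, f a =
        ((Finset.univ.filter fun i : Fin m => a ∈ F i).card : ℝ) := by
      intro a
      have : (Finset.univ.filter fun i : Fin m => a ∈ F i) =
          Finset.univ.filter fun i : Fin m => (i : ℕ) < N a := by
        ext i; simp [hmemF]
      rw [hN a, this, lipCardFilterValLt m (N a) (hNle a)]
    refine ⟨⟨m, F⟩, ⟨hNC, hvalF⟩, ?_⟩
    -- uniqueness
    rintro ⟨m', F'⟩ ⟨hC', hval'⟩
    replace hC' : IsNCChain m' F' := hC'
    replace hval' : ∀ a : α, f a =
        ((Finset.univ.filter fun i : Fin m' => a ∈ F' i).card : ℝ) := hval'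
    obtain ⟨hne', hup', hchain', hnb', hmin'⟩ := hC'
    have hnest : ∀ i j : Fin m', i ≤ j → F' j ⊆ F' i := by
      intro i j hij
      rcases eq_or_lt_of_le hij with rfl | h
      · exact subset_rfl
      · exact (hchain' i j h).subset
    have hcard : ∀ a : α, (Finset.univ.filter fun i : Fin m' => a ∈ F' i).card = N a := by
      intro a
      have h1 := hval' a
      rw [hN a] at h1
      exact_mod_cast h1.symm
    have hmem' : ∀ (a : α) (i : Fin m'), a ∈ F' i ↔ (i : ℕ) < N a := by
      intro a i
      rw [← hcard a]
      have := lipLowerSetMemIff (Finset.univ.filter fun i : Fin m' => a ∈ F' i)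
        (fun i j hij hj => by
          simp only [Finset.mem_filter, Finset.mem_univ, true_and] at hj ⊢
          exact hnest i j hij hj) i
      simpa using this
    have hm : m' = m := by
      have h1 : m' ≤ m := by
        by_cases h0 : m' = 0
        · omega
        · obtain ⟨a, ha⟩ := hne' ⟨m' - 1, by omega⟩
          rw [hmem'] at ha
          have ha' : m' - 1 < N a := ha
          have := hNle a
          omega
      have h2 : m ≤ m' := by
        rw [hmdef]
        apply Finset.sup_le
        intro a _
        have h3 := hcard a
        have hle : (Finset.univ.filter fun i : Fin m' => a ∈ F' i).card ≤ m' := by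
          calc _ ≤ (Finset.univ : Finset (Fin m')).card :=
                Finset.card_le_card (Finset.filter_subset _ _)
            _ = m' := by simp
        omega
      omega
    subst hm
    have : F' = F := by
      funext i
      ext a
      rw [hmem' a i, hmemF i a]
    rw [this]
  · rintro ⟨⟨m, F⟩, ⟨hC, hval⟩, -⟩
    replace hC : IsNCChain m F := hC
    replace hval : ∀ a : α, f a =
        ((Finset.univ.filter fun i : Fin m => a ∈ F i).card : ℝ) := hval
    obtain ⟨hne, hup, hchain, hnb, hmin⟩ := hC
    set n : α → ℕ := fun a => (Finset.univ.filter fun i : Fin m => a ∈ F i).card with hndef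
    have hfn : ∀ a, f a = (n a : ℝ) := hval
    have hnest : ∀ i j : Fin m, i ≤ j → F j ⊆ F i := by
      intro i j hij
      rcases eq_or_lt_of_le hij with rfl | h
      · exact subset_rfl
      · exact (hchain i j h).subset
    have hmem : ∀ (a : α) (i : Fin m), a ∈ F i ↔ (i : ℕ) < n a := by
      intro a i
      have := lipLowerSetMemIff (Finset.univ.filter fun i : Fin m => a ∈ F i)
        (fun i j hij hj => by
          simp only [Finset.mem_filter, Finset.mem_univ, true_and] at hj ⊢
          exact hnest i j hij hj) i
      simpa using this
    have hnm : ∀ a, n a ≤ m := by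
      intro a
      calc n a ≤ (Finset.univ : Finset (Fin m)).card :=
            Finset.card_le_card (Finset.filter_subset _ _)
        _ = m := by simp
    refine ⟨⟨?_, ?_⟩, fun a => ⟨n a, by rw [hfn a]; push_cast; ring⟩⟩
    · -- min condition
      intro a hamin
      have h1 : n a ≤ 1 := by
        by_contra h
        push_neg at h
        have hm2 : 2 ≤ m := le_trans h (hnm a)
        have hj : a ∈ F ⟨1, by omega⟩ := (hmem a _).mpr (by simpa using h)
        exact hmin ⟨0, by omega⟩ ⟨1, by omega⟩ rfl a hamin hj
      rw [hfn a]
      constructor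
      · exact Nat.cast_nonneg _
      · exact_mod_cast h1
    · -- cover condition
      intro a b hcov
      have h1 : n a ≤ n b := by
        apply Finset.card_le_card
        intro i hi
        simp only [Finset.mem_filter, Finset.mem_univ, true_and] at hi ⊢
        exact hup i a b hcov.le hi
      have h2 : n b ≤ n a + 1 := by
        by_contra h
        push_neg at h
        have hm2 : n a + 2 ≤ m := le_trans h (hnm b)
        have hbj : b ∈ F ⟨n a + 1, by omega⟩ := (hmem b _).mpr (by simpa using h)
        have hai : a ∉ F ⟨n a, by omega⟩ := by
          rw [hmem]; simp
        exact hnb ⟨n a, by omega⟩ ⟨n a + 1, by omega⟩ rfl a b hcov hai hbj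
      rw [hfn a, hfn b]
      constructor
      · have h3 : (n a : ℝ) ≤ n b := by exact_mod_cast h1
        linarith
      · have h3 : (n b : ℝ) ≤ (n a : ℝ) + 1 := by exact_mod_cast h2
        linarith
end

section
/- Every integer point of Lip(P) is a vertex of Lip(P), i.e., for each integer point f there is a linear functional uniquely maximized on Lip(P) at f. -/
private lemma key_term (x y : ℝ) (hx0 : 0 ≤ x) (hx1 : x ≤ 1) (hy : y = 0 ∨ y = 1) :
    (2*y-1)*x ≤ (2*y-1)*y ∧ ((2*y-1)*x = (2*y-1)*y ↔ x = y) := by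
  rcases hy with h | h <;> subst h <;> constructor <;> first | linarith | (constructor <;> intro <;> linarith)

private lemma int_in_01 (y : ℝ) (h0 : 0 ≤ y) (h1 : y ≤ 1) (hz : ∃ z : ℤ, y = (z : ℝ)) :
    y = 0 ∨ y = 1 := by
  obtain ⟨z, rfl⟩ := hz
  have hz0 : (0:ℤ) ≤ z := by exact_mod_cast h0
  have hz1 : z ≤ 1 := by exact_mod_cast h1
  interval_cases z <;> simp

/-- Every integer point of `Lip(P)` is a vertex: there is a linear functional
uniquely maximized on `Lip(P)` at it. -/
theorem lip_integer_point_is_vertex {α : Type*} [PartialOrder α] [Fintype α]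
    (f : α → ℝ) (hf : f ∈ Lip α) (hint : ∀ a, ∃ z : ℤ, f a = (z : ℝ)) :
    ∃ c : (α → ℝ) →ₗ[ℝ] ℝ, ∀ g ∈ Lip α, g ≠ f → c g < c f := by
  classical
  obtain ⟨hfmin, hfcov⟩ := hf
  set M : Finset α := Finset.univ.filter (fun a => IsMin a) with hM
  set C : Finset (α × α) := Finset.univ.filter (fun p => p.1 ⋖ p.2) with hC
  -- the linear functional
  set c : (α → ℝ) →ₗ[ℝ] ℝ :=
    (∑ a ∈ M, (2 * f a - 1) • (LinearMap.proj a : (α → ℝ) →ₗ[ℝ] ℝ)) +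
    (∑ p ∈ C, (2 * (f p.2 - f p.1) - 1) •
      ((LinearMap.proj p.2 : (α → ℝ) →ₗ[ℝ] ℝ) - LinearMap.proj p.1)) with hc
  have hceval : ∀ g : α → ℝ, c g =
      (∑ a ∈ M, (2 * f a - 1) * g a) + ∑ p ∈ C, (2 * (f p.2 - f p.1) - 1) * (g p.2 - g p.1) := by
    intro g
    simp [hc, LinearMap.sum_apply, LinearMap.smul_apply, LinearMap.sub_apply, smul_eq_mul]
  refine ⟨c, ?_⟩
  intro g hg hgf
  obtain ⟨hgmin, hgcov⟩ := hg
  -- per-term facts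
  have hMfact : ∀ a ∈ M, (2 * f a - 1) * g a ≤ (2 * f a - 1) * f a ∧
      ((2 * f a - 1) * g a = (2 * f a - 1) * f a ↔ g a = f a) := by
    intro a ha
    have hamin : IsMin a := by simpa [hM] using ha
    exact key_term _ _ (hgmin a hamin).1 (hgmin a hamin).2
      (int_in_01 _ (hfmin a hamin).1 (hfmin a hamin).2 (hint a))
  have hCfact : ∀ p ∈ C, (2 * (f p.2 - f p.1) - 1) * (g p.2 - g p.1) ≤
      (2 * (f p.2 - f p.1) - 1) * (f p.2 - f p.1) ∧
      ((2 * (f p.2 - f p.1) - 1) * (g p.2 - g p.1) =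
        (2 * (f p.2 - f p.1) - 1) * (f p.2 - f p.1) ↔ g p.2 - g p.1 = f p.2 - f p.1) := by
    intro p hp
    have hcov : p.1 ⋖ p.2 := by simpa [hC] using hp
    refine key_term _ _ (hgcov _ _ hcov).1 (hgcov _ _ hcov).2 ?_
    refine int_in_01 _ (hfcov _ _ hcov).1 (hfcov _ _ hcov).2 ?_
    obtain ⟨z1, h1⟩ := hint p.1
    obtain ⟨z2, h2⟩ := hint p.2
    exact ⟨z2 - z1, by push_cast [h1, h2]; ring⟩
  -- c g ≤ c f
  have hle1 : ∀ a ∈ M, (2 * f a - 1) * g a ≤ (2 * f a - 1) * f a := fun a ha => (hMfact a ha).1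
  have hle2 : ∀ p ∈ C, (2 * (f p.2 - f p.1) - 1) * (g p.2 - g p.1) ≤
      (2 * (f p.2 - f p.1) - 1) * (f p.2 - f p.1) := fun p hp => (hCfact p hp).1
  have hle : c g ≤ c f := by
    rw [hceval, hceval]
    exact add_le_add (Finset.sum_le_sum hle1) (Finset.sum_le_sum hle2)
  rcases lt_or_eq_of_le hle with h | h
  · exact h
  -- equality case: derive g = f, contradiction
  exfalso
  have hsum1 : ∑ a ∈ M, (2 * f a - 1) * g a = ∑ a ∈ M, (2 * f a - 1) * f a := by
    by_contra hne
    have h1 : ∑ a ∈ M, (2 * f a - 1) * g a < ∑ a ∈ M, (2 * f a - 1) * f a :=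
      lt_of_le_of_ne (Finset.sum_le_sum hle1) hne
    have h2 := Finset.sum_le_sum hle2
    rw [hceval, hceval] at h
    linarith
  have hsum2 : ∑ p ∈ C, (2 * (f p.2 - f p.1) - 1) * (g p.2 - g p.1) =
      ∑ p ∈ C, (2 * (f p.2 - f p.1) - 1) * (f p.2 - f p.1) := by
    rw [hceval, hceval] at h
    linarith
  have htight1 : ∀ a, IsMin a → g a = f a := by
    intro a ha
    have := (Finset.sum_eq_sum_iff_of_le hle1).mp hsum1 a (by simp [hM, ha])
    exact ((hMfact a (by simp [hM, ha])).2).mp this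
  have htight2 : ∀ a b : α, a ⋖ b → g b - g a = f b - f a := by
    intro a b hab
    have hmem : (a, b) ∈ C := by simp [hC, hab]
    have := (Finset.sum_eq_sum_iff_of_le hle2).mp hsum2 (a, b) hmem
    exact ((hCfact (a, b) hmem).2).mp this
  apply hgf
  funext a
  induction a using WellFoundedLT.induction with
  | _ a ih =>
    by_cases hmin : IsMin a
    · exact htight1 a hmin
    · obtain ⟨b, hb⟩ := exists_covBy_of_wellFoundedGT hmin
      have hgb := ih b hb.lt
      have := htight2 b a hb
      linarith
end

section
/- Let P be the short hanging tree on n elements: elements 1,...,n-1 are minimal and all lie below the maximum n. Then Lip(P) has exactly 2^{n-1} + 2 vertices, namely the indicator vectors 1_F for all filters F ⊆ P, together with 1_P + 1_{{n}}. -/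
lemma combo_le {a b y z c : ℝ} (ha : 0 < a) (hb : 0 < b) (hab : a + b = 1)
    (hy : y ≤ c) (hz : z ≤ c) (h : a * y + b * z = c) : y = c ∧ z = c := by
  have hc : a * c + b * c = c := by rw [← add_mul, hab, one_mul]
  constructor
  · by_contra hne
    have h1 := mul_lt_mul_of_pos_left (lt_of_le_of_ne hy hne) ha
    have h2 := mul_le_mul_of_nonneg_left hz hb.le
    linarith
  · by_contra hne
    have h1 := mul_lt_mul_of_pos_left (lt_of_le_of_ne hz hne) hb
    have h2 := mul_le_mul_of_nonneg_left hy ha.le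
    linarith

lemma combo_ge {a b y z c : ℝ} (ha : 0 < a) (hb : 0 < b) (hab : a + b = 1)
    (hy : c ≤ y) (hz : c ≤ z) (h : a * y + b * z = c) : y = c ∧ z = c := by
  have := combo_le (y := -y) (z := -z) (c := -c) ha hb hab (by linarith) (by linarith)
    (by linarith [h])
  constructor <;> linarith [this.1, this.2]

lemma exists_pos_le {n : ℕ} (f : Fin (n + 1) → ℝ) (hf : ∀ i, 0 < f i) :
    ∃ ε : ℝ, 0 < ε ∧ ∀ i, ε ≤ f i := by
  refine ⟨Finset.univ.inf' Finset.univ_nonempty f, ?_,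
    fun i => Finset.inf'_le f (Finset.mem_univ i)⟩
  rw [Finset.lt_inf'_iff]
  exact fun i _ => hf i

/-- The Lipschitz polytope of the short hanging tree on `n+1` elements
(minimal elements `0,…,n-1`, maximum `Fin.last n`):
`0 ≤ x i ≤ 1` and `0 ≤ x (last) - x i ≤ 1` for all non-maximal `i`. -/
def lipSHT (n : ℕ) : Set (Fin (n + 1) → ℝ) :=
  {x | ∀ i : Fin (n + 1), i ≠ Fin.last n →
        (0 ≤ x i ∧ x i ≤ 1) ∧
        (0 ≤ x (Fin.last n) - x i ∧ x (Fin.last n) - x i ≤ 1)}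

lemma mem_ext {n : ℕ} (hn : 1 ≤ n) {x : Fin (n + 1) → ℝ} (hx : x ∈ lipSHT n)
    (h01 : ∀ i, i ≠ Fin.last n → (x i = 0 ∨ x i = 1))
    (hd01 : ∀ i, i ≠ Fin.last n →
      (x (Fin.last n) - x i = 0 ∨ x (Fin.last n) - x i = 1)) :
    x ∈ Set.extremePoints ℝ (lipSHT n) := by
  refine ⟨hx, ?_⟩
  rintro y hy z hz ⟨a, b, ha, hb, hab, hsum⟩
  have hcoord : ∀ i, a * y i + b * z i = x i := by
    intro i
    have := congrFun hsum i
    simpa using this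
  have key : ∀ i, i ≠ Fin.last n → y i = x i ∧ z i = x i := by
    intro i hi
    rcases h01 i hi with h0 | h1
    · have := combo_ge ha hb hab (hy i hi).1.1 (hz i hi).1.1 ((hcoord i).trans h0)
      rw [h0]; exact this
    · rw [h1]
      exact combo_le ha hb hab (hy i hi).1.2 (hz i hi).1.2 ((hcoord i).trans h1)
  have hi0 : (⟨0, by omega⟩ : Fin (n + 1)) ≠ Fin.last n := by
    intro h
    have := congrArg Fin.val h
    simp [Fin.last] at this
    omega
  set j : Fin (n + 1) := ⟨0, by omega⟩ with hj
  have hlastc : a * (y (Fin.last n) - y j) + b * (z (Fin.last n) - z j)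
      = x (Fin.last n) - x j := by
    have h1 := hcoord (Fin.last n)
    have h2 := hcoord j
    ring_nf
    ring_nf at h1 h2
    linarith
  have keylast : y (Fin.last n) = x (Fin.last n) ∧ z (Fin.last n) = x (Fin.last n) := by
    have hyj := (key j hi0).1
    have hzj := (key j hi0).2
    rcases hd01 j hi0 with h0 | h1
    · have := combo_ge ha hb hab (hy j hi0).2.1 (hz j hi0).2.1 (hlastc.trans h0)
      constructor <;> linarith [this.1, this.2]
    · have := combo_le ha hb hab (hy j hi0).2.2 (hz j hi0).2.2 (hlastc.trans h1)
      constructor <;> linarith [this.1, this.2]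
  funext i
  by_cases hi : i = Fin.last n
  · subst hi; exact keylast.1
  · exact (key i hi).1

lemma not_ext {n : ℕ} {x d : Fin (n + 1) → ℝ} (hd : d ≠ 0)
    (h1 : x + d ∈ lipSHT n) (h2 : x - d ∈ lipSHT n) :
    x ∉ Set.extremePoints ℝ (lipSHT n) := by
  rintro ⟨-, h⟩
  have hseg : x ∈ openSegment ℝ (x - d) (x + d) := by
    refine ⟨1/2, 1/2, by norm_num, by norm_num, by norm_num, ?_⟩
    funext i
    simp
    ring
  have h' := h h2 h1 hseg
  apply hd
  funext i
  have h2' := congrFun h' i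
  simp at h2'
  simpa using h2'

/-- The claimed vertex set: indicator vectors `1_F` of filters `F`
(i.e. `F` nonempty implies the maximum lies in `F`), together with `1_P + 1_{top}`. -/
def vertSHT (n : ℕ) : Set (Fin (n + 1) → ℝ) :=
  {x | (∃ F : Finset (Fin (n + 1)), (∀ i ∈ F, Fin.last n ∈ F) ∧
          x = fun i => if i ∈ F then (1 : ℝ) else 0) ∨
        x = fun i => if i = Fin.last n then (2 : ℝ) else 1}

lemma vert_subset_ext {n : ℕ} (hn : 1 ≤ n) : vertSHT n ⊆ Set.extremePoints ℝ (lipSHT n) := by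
  rintro x (⟨F, hF, rfl⟩ | rfl)
  · by_cases hlast : Fin.last n ∈ F
    · apply mem_ext hn
      · intro i hi
        dsimp only
        constructor
        · constructor <;> split_ifs <;> norm_num
        · simp only [if_pos hlast]
          split_ifs <;> norm_num
      · intro i hi
        split_ifs <;> simp
      · intro i hi
        simp only [if_pos hlast]
        split_ifs <;> norm_num
    · have hF0 : F = ∅ := by
        rw [Finset.eq_empty_iff_forall_notMem]
        exact fun i hi => hlast (hF i hi)
      subst hF0
      apply mem_ext hn <;> intro i hi <;> simp
  · apply mem_ext hn
    · intro i hi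
      dsimp only
      rw [if_pos rfl, if_neg hi]
      norm_num
    · intro i hi
      rw [if_neg hi]
      simp
    · intro i hi
      rw [if_pos rfl, if_neg hi]
      norm_num

lemma pert1 {n : ℕ} {x : Fin (n + 1) → ℝ} (hx : x ∈ lipSHT n) {i1 : Fin (n + 1)}
    (hi1 : i1 ≠ Fin.last n) (h1 : x i1 ≠ 0) (h2 : x i1 ≠ 1)
    (h3 : x (Fin.last n) - x i1 ≠ 0) (h4 : x (Fin.last n) - x i1 ≠ 1) :
    x ∉ Set.extremePoints ℝ (lipSHT n) := by
  classical
  obtain ⟨⟨hb1, hb2⟩, hb3, hb4⟩ := hx i1 hi1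
  have e1 : 0 < x i1 := lt_of_le_of_ne hb1 (Ne.symm h1)
  have e2 : x i1 < 1 := lt_of_le_of_ne hb2 h2
  have e3 : 0 < x (Fin.last n) - x i1 := lt_of_le_of_ne hb3 (Ne.symm h3)
  have e4 : x (Fin.last n) - x i1 < 1 := lt_of_le_of_ne hb4 h4
  set ε := min (min (x i1) (1 - x i1))
      (min (x (Fin.last n) - x i1) (1 - (x (Fin.last n) - x i1))) with hε
  have hεpos : 0 < ε := lt_min (lt_min e1 (by linarith)) (lt_min e3 (by linarith))
  have k1 : ε ≤ x i1 := le_trans (min_le_left _ _) (min_le_left _ _)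
  have k2 : ε ≤ 1 - x i1 := le_trans (min_le_left _ _) (min_le_right _ _)
  have k3 : ε ≤ x (Fin.last n) - x i1 := le_trans (min_le_right _ _) (min_le_left _ _)
  have k4 : ε ≤ 1 - (x (Fin.last n) - x i1) := le_trans (min_le_right _ _) (min_le_right _ _)
  have feas : ∀ s : ℝ, -ε ≤ s → s ≤ ε →
      x + (fun j => if j = i1 then s else 0) ∈ lipSHT n := by
    intro s hs1 hs2 j hj
    have hlast0 : (if Fin.last n = i1 then s else 0) = 0 := if_neg (fun h => hi1 h.symm)
    simp only [Pi.add_apply, hlast0, add_zero]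
    by_cases hji : j = i1
    · subst hji
      simp only [eq_self_iff_true, if_true]
      refine ⟨⟨by linarith, by linarith⟩, by linarith, by linarith⟩
    · simp only [if_neg hji, add_zero]
      exact hx j hj
  have hdne : (fun j => if j = i1 then ε else 0) ≠ (0 : Fin (n + 1) → ℝ) := by
    intro h
    have := congrFun h i1
    simp at this
    linarith
  have hsub : x - (fun j => if j = i1 then ε else 0)
      = x + fun j => if j = i1 then -ε else 0 := by
    funext j
    by_cases hji : j = i1
    · simp [hji]; ring
    · simp [hji]
  exact not_ext hdne (feas ε (by linarith) le_rfl)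
    (by rw [hsub]; exact feas (-ε) le_rfl (by linarith))

lemma pert2 {n : ℕ} {x : Fin (n + 1) → ℝ} (hx : x ∈ lipSHT n)
    (hpin : ∀ i, i ≠ Fin.last n → (x i = 0 ∨ x i = 1) →
      (x (Fin.last n) - x i ≠ 0 ∧ x (Fin.last n) - x i ≠ 1)) :
    x ∉ Set.extremePoints ℝ (lipSHT n) := by
  classical
  set f : Fin (n + 1) → ℝ := fun i =>
    if i = Fin.last n then 1 else
    if x i = 0 ∨ x i = 1 then
      min (x (Fin.last n) - x i) (1 - (x (Fin.last n) - x i))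
    else min (x i) (1 - x i) with hf
  have hfpos : ∀ i, 0 < f i := by
    intro i
    rw [hf]
    dsimp only
    split_ifs with hil h01
    · norm_num
    · obtain ⟨u1, u2⟩ := hpin i hil h01
      obtain ⟨-, u3, u4⟩ := hx i hil
      exact lt_min (lt_of_le_of_ne u3 (Ne.symm u1)) (by linarith [lt_of_le_of_ne u4 u2])
    · push_neg at h01
      obtain ⟨⟨u3, u4⟩, -⟩ := hx i hil
      exact lt_min (lt_of_le_of_ne u3 (Ne.symm h01.1)) (by linarith [lt_of_le_of_ne u4 h01.2])
  obtain ⟨ε, hεpos, hεle⟩ := exists_pos_le f hfpos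
  have feas : ∀ s : ℝ, -ε ≤ s → s ≤ ε →
      x + (fun j => if j = Fin.last n ∨ ¬(x j = 0 ∨ x j = 1) then s else 0) ∈ lipSHT n := by
    intro s hs1 hs2 j hj
    simp only [Pi.add_apply, eq_self_iff_true, true_or, if_true]
    obtain ⟨⟨b1, b2⟩, b3, b4⟩ := hx j hj
    by_cases hcj : x j = 0 ∨ x j = 1
    · rw [if_neg (by simp [hj, hcj])]
      have hfj : f j = min (x (Fin.last n) - x j) (1 - (x (Fin.last n) - x j)) := by
        rw [hf]; dsimp only; rw [if_neg hj, if_pos hcj]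
      have k1 : ε ≤ x (Fin.last n) - x j := (hεle j).trans (hfj ▸ min_le_left _ _)
      have k2 : ε ≤ 1 - (x (Fin.last n) - x j) := (hεle j).trans (hfj ▸ min_le_right _ _)
      refine ⟨⟨by linarith, by linarith⟩, by linarith, by linarith⟩
    · rw [if_pos (Or.inr hcj)]
      have hfj : f j = min (x j) (1 - x j) := by
        rw [hf]; dsimp only; rw [if_neg hj, if_neg hcj]
      have k1 : ε ≤ x j := (hεle j).trans (hfj ▸ min_le_left _ _)
      have k2 : ε ≤ 1 - x j := (hεle j).trans (hfj ▸ min_le_right _ _)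
      refine ⟨⟨by linarith, by linarith⟩, by linarith, by linarith⟩
  have hdne : (fun j => if j = Fin.last n ∨ ¬(x j = 0 ∨ x j = 1) then ε else 0)
      ≠ (0 : Fin (n + 1) → ℝ) := by
    intro h
    have := congrFun h (Fin.last n)
    rw [if_pos (Or.inl rfl)] at this
    simp at this
    linarith
  have hsub : x - (fun j => if j = Fin.last n ∨ ¬(x j = 0 ∨ x j = 1) then ε else 0)
      = x + fun j => if j = Fin.last n ∨ ¬(x j = 0 ∨ x j = 1) then -ε else 0 := by
    funext j
    simp only [Pi.sub_apply, Pi.add_apply]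
    by_cases hcj : j = Fin.last n ∨ ¬(x j = 0 ∨ x j = 1)
    · rw [if_pos hcj, if_pos hcj]; ring
    · rw [if_neg hcj, if_neg hcj]; ring
  exact not_ext hdne (feas ε (by linarith) le_rfl)
    (by rw [hsub]; exact feas (-ε) le_rfl (by linarith))

lemma ext_subset_vert {n : ℕ} (hn : 1 ≤ n) :
    Set.extremePoints ℝ (lipSHT n) ⊆ vertSHT n := by
  classical
  intro x hx
  have hxm : x ∈ lipSHT n := hx.1
  have stepA : ∀ i, i ≠ Fin.last n → ¬(x i = 0 ∨ x i = 1) →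
      (x (Fin.last n) - x i = 0 ∨ x (Fin.last n) - x i = 1) := by
    intro i hi hni
    by_contra hc
    push_neg at hni hc
    exact pert1 hxm hi hni.1 hni.2 hc.1 hc.2 hx
  have stepB : ∃ i, i ≠ Fin.last n ∧ (x i = 0 ∨ x i = 1) ∧
      (x (Fin.last n) - x i = 0 ∨ x (Fin.last n) - x i = 1) := by
    by_contra hc
    push_neg at hc
    exact pert2 hxm hc hx
  obtain ⟨i2, hi2, h2a, h2b⟩ := stepB
  have htval : x (Fin.last n) = 0 ∨ x (Fin.last n) = 1 ∨ x (Fin.last n) = 2 := by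
    rcases h2a with h | h <;> rcases h2b with h' | h'
    · left; linarith
    · right; left; linarith
    · right; left; linarith
    · right; right; linarith
  have all01 : ∀ i, i ≠ Fin.last n → (x i = 0 ∨ x i = 1) := by
    intro i hi
    by_contra h
    push_neg at h
    obtain ⟨h0, h1⟩ := h
    have hA := stepA i hi (by push_neg; exact ⟨h0, h1⟩)
    obtain ⟨⟨b1, b2⟩, -, -⟩ := hxm i hi
    rcases hA with h' | h' <;> rcases htval with u | u | u <;>
      first
        | linarith
        | exact absurd (by linarith) h0
        | exact absurd (by linarith) h1
  rcases htval with ht0 | ht1 | ht2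
  · left
    refine ⟨∅, by simp, ?_⟩
    funext i
    simp only [Finset.notMem_empty, if_false]
    by_cases hi : i = Fin.last n
    · rw [hi]; exact ht0
    · obtain ⟨-, b3, -⟩ := hxm i hi
      rcases all01 i hi with h | h
      · exact h
      · linarith
  · left
    refine ⟨Finset.univ.filter (fun i => x i = 1), ?_, ?_⟩
    · intro i hiF
      simp only [Finset.mem_filter, Finset.mem_univ, true_and]
      exact ht1
    · funext i
      by_cases hxi : x i = 1
      · rw [if_pos (by simp [hxi])]
        exact hxi
      · rw [if_neg (by simp [hxi])]
        by_cases hi : i = Fin.last n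
        · exact absurd (hi ▸ ht1) hxi
        · rcases all01 i hi with h | h
          · exact h
          · exact absurd h hxi
  · right
    funext i
    by_cases hi : i = Fin.last n
    · rw [if_pos hi, hi]; exact ht2
    · rw [if_neg hi]
      obtain ⟨-, -, b4⟩ := hxm i hi
      rcases all01 i hi with h | h
      · linarith
      · exact h

def shtE (n : ℕ) (b : Fin n → Bool) : Fin (n + 1) → ℝ := fun i =>
  if h : i = Fin.last n then 1 else if b (i.castPred h) then 1 else 0

lemma shtE_last (n : ℕ) (b : Fin n → Bool) : shtE n b (Fin.last n) = 1 := by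
  simp [shtE]

lemma shtE_castSucc (n : ℕ) (b : Fin n → Bool) (j : Fin n) :
    shtE n b (Fin.castSucc j) = if b j then 1 else 0 := by
  have h : Fin.castSucc j ≠ Fin.last n := (Fin.castSucc_lt_last j).ne
  simp only [shtE, dif_neg h, Fin.castPred_castSucc]
  by_cases hb : b j <;> simp [hb]

lemma shtE_inj (n : ℕ) : Function.Injective (shtE n) := by
  intro b b' hbb
  funext j
  have h := congrFun hbb (Fin.castSucc j)
  rw [shtE_castSucc, shtE_castSucc] at h
  cases hb : b j <;> cases hb' : b' j <;> rw [hb, hb'] at h <;> first | rfl | norm_num at h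

def shtSp (n : ℕ) : Fin (n + 1) → ℝ := fun i => if i = Fin.last n then (2 : ℝ) else 1

lemma vert_ncard {n : ℕ} (hn : 1 ≤ n) : (vertSHT n).ncard = 2 ^ n + 2 := by
  classical
  set W : Finset (Fin (n + 1) → ℝ) :=
    Finset.univ.image (shtE n) ∪ {(fun _ => 0 : Fin (n + 1) → ℝ), shtSp n} with hW
  have hWvert : vertSHT n = ↑W := by
    ext x
    constructor
    · rintro (⟨F, hF, rfl⟩ | rfl)
      · by_cases hlast : Fin.last n ∈ F
        · have heq : (fun i => if i ∈ F then (1 : ℝ) else 0)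
              = shtE n (fun j => decide (Fin.castSucc j ∈ F)) := by
            funext i
            refine Fin.lastCases ?_ ?_ i
            · rw [shtE_last, if_pos hlast]
            · intro j
              rw [shtE_castSucc]
              by_cases hjF : Fin.castSucc j ∈ F <;> simp [hjF]
          rw [heq]
          exact Finset.mem_coe.mpr
            (Finset.mem_union_left _ (Finset.mem_image_of_mem _ (Finset.mem_univ _)))
        · have hF0 : F = ∅ := by
            rw [Finset.eq_empty_iff_forall_notMem]
            exact fun i hi => hlast (hF i hi)
          subst hF0
          have heq : (fun i => if i ∈ (∅ : Finset (Fin (n + 1))) then (1 : ℝ) else 0)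
              = (fun _ => 0 : Fin (n + 1) → ℝ) := by funext i; simp
          rw [heq]
          exact Finset.mem_coe.mpr
            (Finset.mem_union_right _ (by simp))
      · exact Finset.mem_coe.mpr
          (Finset.mem_union_right _
            (by rw [Finset.mem_insert, Finset.mem_singleton]; exact Or.inr rfl))
    · intro hxW
      rw [Finset.mem_coe, hW, Finset.mem_union] at hxW
      rcases hxW with him | hpair
      · obtain ⟨b, -, rfl⟩ := Finset.mem_image.mp him
        left
        refine ⟨Finset.univ.filter (fun i => shtE n b i = 1), ?_, ?_⟩
        · intro i hi
          simp only [Finset.mem_filter, Finset.mem_univ, true_and]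
          exact shtE_last n b
        · funext i
          refine Fin.lastCases ?_ ?_ i
          · rw [if_pos (by simp [shtE_last]), shtE_last]
          · intro j
            simp only [Finset.mem_filter, Finset.mem_univ, true_and, shtE_castSucc]
            by_cases hb : b j <;> simp [hb]
      · rw [Finset.mem_insert, Finset.mem_singleton] at hpair
        rcases hpair with rfl | rfl
        · left
          exact ⟨∅, by simp, by funext i; simp⟩
        · right
          rfl
  rw [hWvert, Set.ncard_coe_finset]
  have hdisj : Disjoint (Finset.univ.image (shtE n))
      ({(fun _ => 0 : Fin (n + 1) → ℝ), shtSp n} : Finset (Fin (n + 1) → ℝ)) := by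
    rw [Finset.disjoint_left]
    rintro y hy hmem
    obtain ⟨b, -, rfl⟩ := Finset.mem_image.mp hy
    simp only [Finset.mem_insert, Finset.mem_singleton] at hmem
    rcases hmem with h | h
    · have h' := congrFun h (Fin.last n)
      rw [shtE_last] at h'
      norm_num at h'
    · have h' := congrFun h (Fin.last n)
      rw [shtE_last] at h'
      simp [shtSp] at h'
  rw [hW, Finset.card_union_of_disjoint hdisj,
    Finset.card_image_of_injective _ (shtE_inj n), Finset.card_univ]
  have hcard2 : ({(fun _ => 0 : Fin (n + 1) → ℝ), shtSp n}
      : Finset (Fin (n + 1) → ℝ)).card = 2 := by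
    rw [Finset.card_insert_of_notMem, Finset.card_singleton]
    rw [Finset.mem_singleton]
    intro h
    have h' := congrFun h (Fin.last n)
    simp [shtSp] at h'
  rw [hcard2]
  simp

/-- The Lipschitz polytope of the short hanging tree on `n+1 ≥ 2` elements has
exactly `2^n + 2` vertices: the indicators of filters and `1_P + 1_{top}`. -/
theorem lip_short_hanging_tree_vertices (n : ℕ) (hn : 1 ≤ n) :
    Set.extremePoints ℝ (lipSHT n) = vertSHT n ∧ (vertSHT n).ncard = 2 ^ n + 2 := by
  exact ⟨Set.Subset.antisymm (ext_subset_vert hn) (vert_subset_ext hn), vert_ncard hn⟩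
end

section
/- Lipschitz polytopes are 2-level: for every facet F of Lip(P), all vertices of Lip(P) lie either on the affine hyperplane aff(F) or on a single translate of it. -/
section Aux
set_option linter.unusedSectionVars false
set_option linter.unusedVariables false
set_option linter.deprecated false
variable {α : Type*} [PartialOrder α] [Fintype α]

variable {α : Type*} [PartialOrder α] [Fintype α]

lemma lip_convex : Convex ℝ (Lip α) := by
  intro f hf g hg s t hs ht hst
  constructor
  · intro a ha
    have h1 := hf.1 a ha; have h2 := hg.1 a ha
    have : (s • f + t • g) a = s * f a + t * g a := by simp
    rw [this]
    constructor <;> nlinarith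
  · intro a b hab
    have h1 := hf.2 a b hab; have h2 := hg.2 a b hab
    have : (s • f + t • g) b - (s • f + t • g) a = s * (f b - f a) + t * (g b - g a) := by
      simp; ring
    rw [this]
    constructor <;> nlinarith

noncomputable def bnd (x y : ℝ) : ℝ := if y = 0 then 1 else min x (1 - x) / |y|

lemma bnd_pos {x y : ℝ} (h : y ≠ 0 → 0 < x ∧ x < 1) : 0 < bnd x y := by
  unfold bnd
  split
  · norm_num
  · next hy =>
    obtain ⟨h1, h2⟩ := h hy
    apply div_pos (by simp [lt_min_iff]; constructor <;> linarith) (abs_pos.mpr hy)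

lemma bnd_spec {x y t : ℝ} (h0 : 0 ≤ x) (h1 : x ≤ 1) (h : y ≠ 0 → 0 < x ∧ x < 1)
    (ht : |t| ≤ bnd x y) : 0 ≤ x + t * y ∧ x + t * y ≤ 1 := by
  rcases eq_or_ne y 0 with hy | hy
  · simp [hy]; constructor <;> linarith
  · have hy' : 0 < |y| := abs_pos.mpr hy
    rw [bnd, if_neg hy] at ht
    have h2 : |t| * |y| ≤ min x (1 - x) := by
      rw [← le_div_iff₀ hy']; exact ht
    have h3 : |t * y| ≤ min x (1 - x) := by rw [abs_mul]; exact h2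
    have h4 := abs_le.mp h3
    have := min_le_left x (1 - x); have := min_le_right x (1 - x)
    constructor <;> [nlinarith; nlinarith]

lemma lip_move (v w : α → ℝ) (hv : v ∈ Lip α)
    (h3 : ∀ a, IsMin a → w a ≠ 0 → 0 < v a ∧ v a < 1)
    (h4 : ∀ a b : α, a ⋖ b → w b - w a ≠ 0 → 0 < v b - v a ∧ v b - v a < 1) :
    ∃ ε > 0, ∀ t : ℝ, |t| ≤ ε → v + t • w ∈ Lip α := by
  classical
  set c1 : α → ℝ := fun a => if IsMin a then bnd (v a) (w a) else 1 with hc1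
  set c2 : α × α → ℝ := fun p =>
    if p.1 ⋖ p.2 then bnd (v p.2 - v p.1) (w p.2 - w p.1) else 1 with hc2
  set S : Finset ℝ := insert 1 (Finset.univ.image c1 ∪ Finset.univ.image c2) with hS
  have hSne : S.Nonempty := ⟨1, by simp [hS]⟩
  refine ⟨S.min' hSne, ?_, ?_⟩
  · rw [gt_iff_lt, Finset.lt_min'_iff]
    intro y hy
    simp only [hS, Finset.mem_insert, Finset.mem_union, Finset.mem_image,
      Finset.mem_univ, true_and] at hy
    rcases hy with rfl | ⟨a, rfl⟩ | ⟨p, rfl⟩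
    · norm_num
    · simp only [hc1]
      split
      · next ha => exact bnd_pos (fun hw => h3 a ha hw)
      · norm_num
    · simp only [hc2]
      split
      · next hp => exact bnd_pos (fun hw => h4 p.1 p.2 hp hw)
      · norm_num
  · intro t ht
    constructor
    · intro a ha
      have hmem : c1 a ∈ S := by
        simp [hS]
      have hle : |t| ≤ bnd (v a) (w a) := by
        calc |t| ≤ S.min' hSne := ht
        _ ≤ c1 a := S.min'_le _ hmem
        _ = bnd (v a) (w a) := by simp [hc1, ha]
      have := bnd_spec (hv.1 a ha).1 (hv.1 a ha).2 (h3 a ha) hle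
      simpa using this
    · intro a b hab
      have hmem : c2 (a, b) ∈ S := by
        simp only [hS, Finset.mem_insert, Finset.mem_union, Finset.mem_image,
          Finset.mem_univ, true_and]
        right; right; exact ⟨(a, b), rfl⟩
      have hle : |t| ≤ bnd (v b - v a) (w b - w a) := by
        calc |t| ≤ S.min' hSne := ht
        _ ≤ c2 (a, b) := S.min'_le _ hmem
        _ = _ := by simp [hc2, hab]
      have := bnd_spec (hv.2 a b hab).1 (hv.2 a b hab).2 (h4 a b hab) hle
      have heq : (v + t • w) b - (v + t • w) a = (v b - v a) + t * (w b - w a) := by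
        simp; ring
      rw [heq]
      exact this

lemma lip_extreme_integral (v : α → ℝ) (hv : v ∈ Set.extremePoints ℝ (Lip α)) :
    ∀ x, ∃ n : ℤ, v x = n := by
  classical
  by_contra hcon
  push_neg at hcon
  obtain ⟨x₀, hx₀⟩ := hcon
  have hv0 : v ∈ Lip α := hv.1
  set θ := Int.fract (v x₀) with hθ
  have hθ0 : θ ≠ 0 := by
    intro h
    apply hx₀ ⌊v x₀⌋
    have h2 : Int.fract (v x₀) = 0 := h
    have := Int.fract_add_floor (v x₀)
    rw [h2] at this
    linarith
  set d : α → ℝ := fun x => if Int.fract (v x) = θ then 1 else 0 with hd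
  have key : ∀ x y : α, v x - v y = 0 ∨ v x - v y = 1 → d x = d y := by
    intro x y h
    have hfr : Int.fract (v x) = Int.fract (v y) := by
      rcases h with h | h
      · have : v x = v y := by linarith
        rw [this]
      · have : v x = v y + (1 : ℤ) := by push_cast; linarith
        rw [this, Int.fract_add_intCast]
    simp [hd, hfr]
  have h3 : ∀ a, IsMin a → d a ≠ 0 → 0 < v a ∧ v a < 1 := by
    intro a ha hda
    have hfa : Int.fract (v a) = θ := by
      by_contra h; simp [hd, h] at hda
    have hbnd := hv0.1 a ha
    constructor
    · rcases lt_or_eq_of_le hbnd.1 with h | h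
      · exact h
      · exfalso; apply hθ0; rw [← hfa, ← h, Int.fract_zero]
    · rcases lt_or_eq_of_le hbnd.2 with h | h
      · exact h
      · exfalso; apply hθ0; rw [← hfa, h, Int.fract_one]
  have h4 : ∀ a b : α, a ⋖ b → d b - d a ≠ 0 → 0 < v b - v a ∧ v b - v a < 1 := by
    intro a b hab hdab
    have hbnd := hv0.2 a b hab
    constructor
    · rcases lt_or_eq_of_le hbnd.1 with h | h
      · exact h
      · exact absurd (key b a (Or.inl (by linarith))) (by intro h'; apply hdab; linarith)
    · rcases lt_or_eq_of_le hbnd.2 with h | h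
      · exact h
      · exact absurd (key b a (Or.inr (by linarith))) (by intro h'; apply hdab; linarith)
  obtain ⟨ε, hε, hmem⟩ := lip_move v d hv0 h3 h4
  have hx : v + ε • d ∈ Lip α := hmem ε (by rw [abs_of_pos hε])
  have hy : v + (-ε) • d ∈ Lip α := hmem (-ε) (by rw [abs_neg, abs_of_pos hε])
  have hseg : v ∈ openSegment ℝ (v + ε • d) (v + (-ε) • d) := by
    refine ⟨1/2, 1/2, by norm_num, by norm_num, by norm_num, ?_⟩
    funext x
    simp only [Pi.add_apply, Pi.smul_apply, smul_eq_mul, neg_mul, Pi.neg_apply]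
    ring
  have := hv.2 hx hy hseg
  have h1 : v + ε • d = v := this
  have h2 : d x₀ = 1 := by simp [hd, hθ]
  have : (v + ε • d) x₀ = v x₀ := by rw [h1]
  simp only [Pi.add_apply, Pi.smul_apply, smul_eq_mul, h2, mul_one] at this
  linarith

lemma lip_exists_tight (F : Set (α → ℝ)) (hexp : IsExposed ℝ (Lip α) F) (hne : F.Nonempty)
    (hproper : F ≠ Lip α) :
    (∃ a, IsMin a ∧ ∀ x ∈ F, x a = 0) ∨ (∃ a, IsMin a ∧ ∀ x ∈ F, x a = 1) ∨
    (∃ a b : α, a ⋖ b ∧ ∀ x ∈ F, x b - x a = 0) ∨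
    (∃ a b : α, a ⋖ b ∧ ∀ x ∈ F, x b - x a = 1) := by
  classical
  by_contra hcon
  push_neg at hcon
  obtain ⟨h0, h1, h2, h3⟩ := hcon
  have hFLip : F ⊆ Lip α := hexp.subset
  have hFconv : Convex ℝ F := hexp.convex lip_convex
  have hmid : ∀ x ∈ F, ∀ y ∈ F, (1/2 : ℝ) • x + (1/2 : ℝ) • y ∈ F := fun x hx y hy =>
    hFconv hx hy (by norm_num) (by norm_num) (by norm_num)
  -- step 1: a point strict on all cover constraints in t
  have claim1 : ∀ t : Finset (α × α), ∃ x ∈ F,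
      ∀ p ∈ t, p.1 ⋖ p.2 → 0 < x p.2 - x p.1 ∧ x p.2 - x p.1 < 1 := by
    intro t
    induction t using Finset.induction with
    | empty => exact ⟨hne.choose, hne.choose_spec, by simp⟩
    | insert _ _ hni ih =>
      next p t' =>
      obtain ⟨x, hxF, hx⟩ := ih
      by_cases hp : p.1 ⋖ p.2
      · obtain ⟨x₁, hx₁F, hx₁⟩ := h2 p.1 p.2 hp
        obtain ⟨x₂, hx₂F, hx₂⟩ := h3 p.1 p.2 hp
        have hx₁s : 0 < x₁ p.2 - x₁ p.1 :=
          lt_of_le_of_ne ((hFLip hx₁F).2 p.1 p.2 hp).1 (Ne.symm hx₁)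
        have hx₂s : x₂ p.2 - x₂ p.1 < 1 :=
          lt_of_le_of_ne ((hFLip hx₂F).2 p.1 p.2 hp).2 hx₂
        set m1 := (1/2 : ℝ) • x + (1/2 : ℝ) • x₁ with hm1
        set m := (1/2 : ℝ) • m1 + (1/2 : ℝ) • x₂ with hm
        have hm1F : m1 ∈ F := hmid x hxF x₁ hx₁F
        have hmF : m ∈ F := hmid m1 hm1F x₂ hx₂F
        have hval : ∀ z : α, m z = x z / 4 + x₁ z / 4 + x₂ z / 2 := by
          intro z; simp [hm, hm1]; ring
        refine ⟨m, hmF, ?_⟩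
        intro q hq hq2
        have hxq := (hFLip hxF).2 q.1 q.2 hq2
        have hx1q := (hFLip hx₁F).2 q.1 q.2 hq2
        have hx2q := (hFLip hx₂F).2 q.1 q.2 hq2
        rcases Finset.mem_insert.mp hq with rfl | hq'
        · rw [hval, hval]
          constructor <;> nlinarith [hx₁s, hx₂s]
        · have := hx q hq' hq2
          rw [hval, hval]
          constructor <;> nlinarith [this.1, this.2]
      · refine ⟨x, hxF, ?_⟩
        intro q hq hq2
        rcases Finset.mem_insert.mp hq with rfl | hq'
        · exact absurd hq2 hp
        · exact hx q hq' hq2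
  -- step 2: additionally strict on min constraints in s
  have claim2 : ∀ s : Finset α, ∃ x ∈ F,
      (∀ a ∈ s, IsMin a → 0 < x a ∧ x a < 1) ∧
      (∀ a b : α, a ⋖ b → 0 < x b - x a ∧ x b - x a < 1) := by
    intro s
    induction s using Finset.induction with
    | empty =>
      obtain ⟨x, hxF, hx⟩ := claim1 Finset.univ
      exact ⟨x, hxF, by simp, fun a b hab => hx (a, b) (Finset.mem_univ _) hab⟩
    | insert _ _ hni ih =>
      next a s' =>
      obtain ⟨x, hxF, hxs, hxc⟩ := ih
      by_cases ha : IsMin a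
      · obtain ⟨x₁, hx₁F, hx₁⟩ := h0 a ha
        obtain ⟨x₂, hx₂F, hx₂⟩ := h1 a ha
        have hx₁s : 0 < x₁ a := lt_of_le_of_ne ((hFLip hx₁F).1 a ha).1 (Ne.symm hx₁)
        have hx₂s : x₂ a < 1 := lt_of_le_of_ne ((hFLip hx₂F).1 a ha).2 hx₂
        set m1 := (1/2 : ℝ) • x + (1/2 : ℝ) • x₁ with hm1
        set m := (1/2 : ℝ) • m1 + (1/2 : ℝ) • x₂ with hm
        have hm1F : m1 ∈ F := hmid x hxF x₁ hx₁F
        have hmF : m ∈ F := hmid m1 hm1F x₂ hx₂F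
        have hval : ∀ z : α, m z = x z / 4 + x₁ z / 4 + x₂ z / 2 := by
          intro z; simp [hm, hm1]; ring
        refine ⟨m, hmF, ?_, ?_⟩
        · intro b hb hbmin
          have hxb := (hFLip hxF).1 b hbmin
          have hx1b := (hFLip hx₁F).1 b hbmin
          have hx2b := (hFLip hx₂F).1 b hbmin
          rcases Finset.mem_insert.mp hb with rfl | hb'
          · rw [hval]; constructor <;> nlinarith [hx₁s, hx₂s]
          · have := hxs b hb' hbmin
            rw [hval]; constructor <;> nlinarith [this.1, this.2]
        · intro b c hbc
          have hxq := (hFLip hxF).2 b c hbc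
          have hx1q := (hFLip hx₁F).2 b c hbc
          have hx2q := (hFLip hx₂F).2 b c hbc
          have := hxc b c hbc
          rw [hval, hval]
          constructor <;> nlinarith [this.1, this.2]
      · refine ⟨x, hxF, ?_, hxc⟩
        intro b hb hbmin
        rcases Finset.mem_insert.mp hb with rfl | hb'
        · exact absurd hbmin ha
        · exact hxs b hb' hbmin
  obtain ⟨xb, hxbF, hstrict_min, hstrict_cov⟩ := claim2 Finset.univ
  have hstrict_min' : ∀ a : α, IsMin a → 0 < xb a ∧ xb a < 1 := fun a =>
    hstrict_min a (Finset.mem_univ a)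
  -- exposing functional
  obtain ⟨l, hl⟩ := hexp hne
  have hxbF' := hxbF
  rw [hl] at hxbF'
  obtain ⟨hxbLip, hmax⟩ := hxbF'
  have hss : F ⊂ Lip α := ⟨hFLip, fun h => hproper (le_antisymm hFLip h)⟩
  obtain ⟨y₀, hy₀Lip, hy₀F⟩ := Set.exists_of_ssubset hss
  have hy₀lt : l y₀ < l xb := by
    rw [hl] at hy₀F
    simp only [Set.mem_setOf_eq, not_and, hy₀Lip, true_implies] at hy₀F
    push_neg at hy₀F
    obtain ⟨z, hz, hzgt⟩ := hy₀F
    exact lt_of_lt_of_le hzgt (hmax z hz)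
  set w := xb - y₀ with hw
  obtain ⟨ε, hε, hmem⟩ := lip_move xb w hxbLip
    (fun a ha _ => hstrict_min' a ha) (fun a b hab _ => hstrict_cov a b hab)
  have hp : xb + ε • w ∈ Lip α := hmem ε (by rw [abs_of_pos hε])
  have := hmax _ hp
  have hlp : l (xb + ε • w) = l xb + ε * (l xb - l y₀) := by
    simp [hw, map_add, map_smul, map_sub, smul_eq_mul]
  rw [hlp] at this
  nlinarith

lemma span_eq_hyperplane (F : Set (α → ℝ)) (g : (α → ℝ) →ₗ[ℝ] ℝ) (c : ℝ) (q₀ : α → ℝ)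
    (hq : g q₀ = 1) (htight : ∀ x ∈ F, g x = c) (hne : F.Nonempty)
    (hdim : Module.finrank ℝ ↥(vectorSpan ℝ F) + 1 = Fintype.card α) :
    ∀ v, v ∈ affineSpan ℝ F ↔ g v = c := by
  obtain ⟨p, hp⟩ := hne
  have hgp : g p = c := htight p hp
  set H : AffineSubspace ℝ (α → ℝ) :=
    { carrier := {x | g x = c}
      smul_vsub_vadd_mem' := by
        intro t x y z hx hy hz
        simp only [Set.mem_setOf_eq] at *
        show g (t • (x -ᵥ y) +ᵥ z) = c
        simp only [vsub_eq_sub, vadd_eq_add, map_add, map_smul, map_sub, smul_eq_mul, hx, hy, hz]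
        ring } with hH
  have hle : affineSpan ℝ F ≤ H := affineSpan_le.mpr (fun x hx => htight x hx)
  have hpH : p ∈ H := hgp
  have hdir : H.direction = LinearMap.ker g := by
    ext w
    rw [← AffineSubspace.vadd_mem_iff_mem_direction w hpH]
    show g (w +ᵥ p) = c ↔ w ∈ LinearMap.ker g
    simp only [vadd_eq_add, map_add, hgp, LinearMap.mem_ker]
    constructor <;> intro h <;> linarith
  have hsurj : LinearMap.range g = ⊤ := by
    rw [LinearMap.range_eq_top]
    intro r
    exact ⟨r • q₀, by simp [map_smul, hq]⟩
  have hker : Module.finrank ℝ (LinearMap.ker g) + 1 = Fintype.card α := by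
    have h1 := LinearMap.finrank_range_add_finrank_ker g
    rw [hsurj] at h1
    simp only [finrank_top, Module.finrank_self] at h1
    rw [Module.finrank_fintype_fun_eq_card] at h1
    omega
  have hdeq : (affineSpan ℝ F).direction = H.direction := by
    apply Submodule.eq_of_le_of_finrank_eq (AffineSubspace.direction_le hle)
    rw [direction_affineSpan, hdir]
    omega
  have hEq : affineSpan ℝ F = H :=
    AffineSubspace.ext_of_direction_eq hdeq ⟨p, subset_affineSpan ℝ F hp, hpH⟩
  intro v
  rw [hEq]
  rfl

lemma lip_finish (F : Set (α → ℝ)) (g : (α → ℝ) →ₗ[ℝ] ℝ) (c : ℝ) (q₀ : α → ℝ)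
    (hq : g q₀ = 1) (htight : ∀ x ∈ F, g x = c) (hc : c = 0 ∨ c = 1) (hne : F.Nonempty)
    (hdim : Module.finrank ℝ ↥(vectorSpan ℝ F) + 1 = Fintype.card α)
    (hvals : ∀ v ∈ Set.extremePoints ℝ (Lip α), g v = 0 ∨ g v = 1) :
    ∃ q : α → ℝ, ∀ v ∈ Set.extremePoints ℝ (Lip α),
      v ∈ affineSpan ℝ F ∨ v - q ∈ affineSpan ℝ F := by
  have hspan := span_eq_hyperplane F g c q₀ hq htight hne hdim
  refine ⟨(1 - 2 * c) • q₀, fun v hv => ?_⟩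
  by_cases hvc : g v = c
  · exact Or.inl ((hspan v).mpr hvc)
  · refine Or.inr ((hspan _).mpr ?_)
    have hgv : g v = 1 - c := by
      rcases hvals v hv with h | h <;> rcases hc with rfl | rfl <;>
        first | (exfalso; exact hvc h) | (rw [h]; ring)
    have : g (v - (1 - 2 * c) • q₀) = g v - (1 - 2 * c) * g q₀ := by
      simp [map_sub, map_smul]
    rw [this, hgv, hq]
    ring

end Aux

/-- Lipschitz polytopes are 2-level: for every facet `F` of `Lip(P)` (a proper
nonempty exposed face of affine dimension one less than full) there is a translate
`q + aff F` such that every vertex of `Lip(P)` lies on `aff F` or on `q + aff F`. -/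
theorem lip_two_level {α : Type*} [PartialOrder α] [Fintype α]
    (F : Set (α → ℝ)) (hexp : IsExposed ℝ (Lip α) F) (hne : F.Nonempty)
    (hproper : F ≠ Lip α)
    (hdim : Module.finrank ℝ ↥(vectorSpan ℝ F) + 1 = Fintype.card α) :
    ∃ q : α → ℝ, ∀ v ∈ Set.extremePoints ℝ (Lip α),
      v ∈ affineSpan ℝ F ∨ v - q ∈ affineSpan ℝ F := by
  classical
  have hint01 : ∀ v ∈ Set.extremePoints ℝ (Lip α), ∀ a : α, IsMin a → v a = 0 ∨ v a = 1 := by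
    intro v hv a ha
    obtain ⟨n, hn⟩ := lip_extreme_integral v hv a
    have hb := hv.1.1 a ha
    rw [hn] at hb ⊢
    have h0 : (0 : ℤ) ≤ n := by exact_mod_cast hb.1
    have h1 : n ≤ 1 := by exact_mod_cast hb.2
    have : n = 0 ∨ n = 1 := by omega
    rcases this with rfl | rfl <;> simp
  have hcov01 : ∀ v ∈ Set.extremePoints ℝ (Lip α), ∀ a b : α, a ⋖ b →
      v b - v a = 0 ∨ v b - v a = 1 := by
    intro v hv a b hab
    obtain ⟨n, hn⟩ := lip_extreme_integral v hv a
    obtain ⟨m, hm⟩ := lip_extreme_integral v hv b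
    have hb := hv.1.2 a b hab
    rw [hn, hm] at hb ⊢
    have h0 : (0 : ℤ) ≤ m - n := by exact_mod_cast hb.1
    have h1 : m - n ≤ 1 := by
      have : ((m : ℝ) - n) ≤ 1 := hb.2
      exact_mod_cast this
    have : m - n = 0 ∨ m - n = 1 := by omega
    rcases this with h | h
    · left
      have hmn : (m : ℝ) = n := by exact_mod_cast (by omega : m = n)
      rw [hmn]; ring
    · right
      have : (m : ℝ) - n = ((m - n : ℤ) : ℝ) := by push_cast; ring
      rw [this, h]; simp
  rcases lip_exists_tight F hexp hne hproper with ⟨a, ha, ht⟩ | ⟨a, ha, ht⟩ |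
    ⟨a, b, hab, ht⟩ | ⟨a, b, hab, ht⟩
  · exact lip_finish F (LinearMap.proj a) 0 (Pi.single a 1)
      (by simp) (by simpa using ht) (Or.inl rfl) hne hdim
      (fun v hv => by simpa using hint01 v hv a ha)
  · exact lip_finish F (LinearMap.proj a) 1 (Pi.single a 1)
      (by simp) (by simpa using ht) (Or.inr rfl) hne hdim
      (fun v hv => by simpa using hint01 v hv a ha)
  · refine lip_finish F ((LinearMap.proj b : (α → ℝ) →ₗ[ℝ] ℝ) - (LinearMap.proj a : (α → ℝ) →ₗ[ℝ] ℝ)) 0 (Pi.single b 1)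
      ?_ (fun x hx => ht x hx) (Or.inl rfl) hne hdim
      (fun v hv => hcov01 v hv a b hab)
    simp [Pi.single_eq_of_ne hab.lt.ne]
  · refine lip_finish F ((LinearMap.proj b : (α → ℝ) →ₗ[ℝ] ℝ) - (LinearMap.proj a : (α → ℝ) →ₗ[ℝ] ℝ)) 1 (Pi.single b 1)
      ?_ (fun x hx => ht x hx) (Or.inr rfl) hne hdim
      (fun v hv => hcov01 v hv a b hab)
    simp [Pi.single_eq_of_ne hab.lt.ne]
end

section
/- Let P be a naturally labeled poset on {1,...,n}, τ a permutation of {1,...,n}, and q ∈ ℤ^n. Then the alcove q + Δ_τ is contained in Lip(P) if and only if τ is descent-compatible with P and q_a = des_{P,τ}(a) for all a ∈ P. -/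
/-- `b` covers `a` in the partial order `r`. -/
def CovR {n : ℕ} (r : Fin n → Fin n → Prop) (a b : Fin n) : Prop :=
  r a b ∧ a ≠ b ∧ ∀ c, r a c → r c b → c = a ∨ c = b

/-- `a` is a minimal element of the partial order `r`. -/
def MinR {n : ℕ} (r : Fin n → Fin n → Prop) (a : Fin n) : Prop :=
  ∀ b, r b a → b = a

/-- `c` is a saturated chain in `P̂` from `0̂` to `a`: its `P`-part starts at a
minimal element of `P`, proceeds by cover relations, and ends at `a`. -/
def IsSatChain {n : ℕ} (r : Fin n → Fin n → Prop) (k : ℕ)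
    (c : Fin (k + 1) → Fin n) (a : Fin n) : Prop :=
  MinR r (c 0) ∧ (∀ i : Fin k, CovR r (c i.castSucc) (c i.succ)) ∧ c (Fin.last k) = a

/-- The number of descents of `τ` along the saturated chain `c` (the initial step
`0̂ ⋖ c 0` is never a descent since `τ(0̂) = 0`). -/
def desAlong {n : ℕ} (τ : Equiv.Perm (Fin n)) (k : ℕ) (c : Fin (k + 1) → Fin n) : ℕ :=
  (Finset.univ.filter fun i : Fin k => τ (c i.succ) < τ (c i.castSucc)).card

/-- `τ` is descent-compatible with the poset `r`: the number of descents along a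
saturated chain from `0̂` to `a` does not depend on the chain. -/
def DescentCompatible {n : ℕ} (r : Fin n → Fin n → Prop) (τ : Equiv.Perm (Fin n)) : Prop :=
  ∀ a : Fin n, ∀ (k₁ k₂ : ℕ) (c₁ : Fin (k₁ + 1) → Fin n) (c₂ : Fin (k₂ + 1) → Fin n),
    IsSatChain r k₁ c₁ a → IsSatChain r k₂ c₂ a →
      desAlong τ k₁ c₁ = desAlong τ k₂ c₂

/-- The Lipschitz polytope of the poset `r` on `Fin n`. -/
def LipR {n : ℕ} (r : Fin n → Fin n → Prop) : Set (Fin n → ℝ) :=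
  {f | (∀ a, MinR r a → 0 ≤ f a ∧ f a ≤ 1) ∧
       ∀ a b, CovR r a b → 0 ≤ f b - f a ∧ f b - f a ≤ 1}

/-- The alcove `Δ_τ = {x : 0 ≤ x_{τ⁻¹(1)} ≤ ⋯ ≤ x_{τ⁻¹(n)} ≤ 1}`. -/
def alcove {n : ℕ} (τ : Equiv.Perm (Fin n)) : Set (Fin n → ℝ) :=
  {x | (∀ a b, τ a ≤ τ b → x a ≤ x b) ∧ ∀ a, 0 ≤ x a ∧ x a ≤ 1}


section AuxLemmas
variable {n : ℕ}

lemma desAlong_eq_sum (τ : Equiv.Perm (Fin n)) {k : ℕ} (c : Fin (k + 1) → Fin n) :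
    desAlong τ k c = ∑ i : Fin k, if τ (c i.succ) < τ (c i.castSucc) then 1 else 0 := by
  unfold desAlong
  rw [Finset.card_filter]

lemma snoc_chain (r : Fin n → Fin n → Prop) {k : ℕ} {c : Fin (k + 1) → Fin n} {a b : Fin n}
    (hc : IsSatChain r k c a) (hab : CovR r a b) :
    IsSatChain r (k + 1) (Fin.snoc c b) b := by
  obtain ⟨hmin, hcov, hlast⟩ := hc
  refine ⟨?_, ?_, ?_⟩
  · have h0 : (Fin.snoc c b : Fin (k + 2) → Fin n) 0 = c 0 := by
      show (Fin.snoc c b : Fin (k + 2) → Fin n) (Fin.castSucc 0) = c 0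
      rw [Fin.snoc_castSucc]
    rw [h0]; exact hmin
  · intro i
    refine Fin.lastCases ?_ ?_ i
    · rw [Fin.succ_last, Fin.snoc_last, Fin.snoc_castSucc, hlast]; exact hab
    · intro j
      rw [Fin.succ_castSucc, Fin.snoc_castSucc, Fin.snoc_castSucc]
      exact hcov j
  · rw [Fin.snoc_last]

lemma desAlong_snoc (τ : Equiv.Perm (Fin n)) {k : ℕ} (c : Fin (k + 1) → Fin n) (b : Fin n) :
    desAlong τ (k + 1) (Fin.snoc c b) =
      desAlong τ k c + (if τ b < τ (c (Fin.last k)) then 1 else 0) := by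
  rw [desAlong_eq_sum, desAlong_eq_sum, Fin.sum_univ_castSucc]
  congr 1
  · apply Finset.sum_congr rfl; intro j _
    rw [Fin.succ_castSucc, Fin.snoc_castSucc, Fin.snoc_castSucc]
  · rw [Fin.succ_last, Fin.snoc_last, Fin.snoc_castSucc]

lemma desAlong_succ (τ : Equiv.Perm (Fin n)) {k : ℕ} (c : Fin (k + 2) → Fin n) :
    desAlong τ (k + 1) c = desAlong τ k (c ∘ Fin.castSucc)
      + (if τ (c (Fin.last (k + 1))) < τ (c (Fin.last k).castSucc) then 1 else 0) := by
  rw [desAlong_eq_sum, desAlong_eq_sum, Fin.sum_univ_castSucc]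
  simp only [Function.comp_apply, Fin.succ_castSucc, Fin.succ_last]

lemma chain_exists_aux (r : Fin n → Fin n → Prop) (hnat : ∀ a b, r a b → a ≤ b) :
    ∀ (m : ℕ) (a : Fin n), a.val < m →
      ∃ k, ∃ c : Fin (k + 1) → Fin n, IsSatChain r k c a := by
  classical
  intro m
  induction m with
  | zero => intro a h; omega
  | succ m ih =>
    intro a ha
    by_cases hmin : MinR r a
    · exact ⟨0, fun _ => a, hmin, fun i => i.elim0, rfl⟩
    · have hex : ∃ b, r b a ∧ b ≠ a := by
        by_contra h
        push_neg at h
        exact hmin (fun b hb => h b hb)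
      obtain ⟨b0, hb0r, hb0ne⟩ := hex
      set S := Finset.univ.filter (fun c => r c a ∧ c ≠ a) with hSdef
      have hS : S.Nonempty := ⟨b0, by simp [hSdef, hb0r, hb0ne]⟩
      set b := S.max' hS with hb
      have hbmem : b ∈ S := S.max'_mem hS
      have hbr : r b a ∧ b ≠ a := by simpa [hSdef] using hbmem
      have hcov : CovR r b a := by
        refine ⟨hbr.1, hbr.2, ?_⟩
        intro c hbc hca
        by_cases hc : c = a
        · right; exact hc
        · left
          have hmem : c ∈ S := by simp [hSdef, hca, hc]
          exact le_antisymm (S.le_max' c hmem) (hnat _ _ hbc)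
      have hble : b ≤ a := hnat _ _ hbr.1
      have hblt : b.val < a.val := by
        have h1 : b.val ≤ a.val := hble
        have h2 : b.val ≠ a.val := fun h => hbr.2 (Fin.ext h)
        omega
      obtain ⟨k, c, hc⟩ := ih b (by omega)
      exact ⟨k + 1, Fin.snoc c a, snoc_chain r hc hcov⟩

lemma chain_exists (r : Fin n → Fin n → Prop) (hnat : ∀ a b, r a b → a ≤ b) (a : Fin n) :
    ∃ k, ∃ c : Fin (k + 1) → Fin n, IsSatChain r k c a :=
  chain_exists_aux r hnat (a.val + 1) a (by omega)

end AuxLemmas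

/-- For a naturally labeled poset `r` on `Fin n`, the alcove `q + Δ_τ` is
contained in `Lip(P)` iff `τ` is descent-compatible with `P` and
`q a = des_{P,τ}(a)` for all `a`. -/
theorem alcove_in_lip_iff {n : ℕ} (r : Fin n → Fin n → Prop)
    (hrefl : ∀ a, r a a) (hantisymm : ∀ a b, r a b → r b a → a = b)
    (htrans : ∀ a b c, r a b → r b c → r a c)
    (hnat : ∀ a b, r a b → a ≤ b)
    (τ : Equiv.Perm (Fin n)) (q : Fin n → ℤ) :
    {x : Fin n → ℝ | ∃ y ∈ alcove τ, x = fun a => (q a : ℝ) + y a} ⊆ LipR r ↔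
      (DescentCompatible r τ ∧
        ∀ (a : Fin n) (k : ℕ) (c : Fin (k + 1) → Fin n),
          IsSatChain r k c a → q a = (desAlong τ k c : ℤ)) := by
  constructor
  · -- forward direction
    intro hsub
    -- membership of q + y for any y in the alcove
    have hmem : ∀ y ∈ alcove τ, (fun a => (q a : ℝ) + y a) ∈ LipR r := by
      intro y hy
      exact hsub ⟨y, hy, rfl⟩
    have hzero : (fun _ : Fin n => (0 : ℝ)) ∈ alcove τ :=
      ⟨fun _ _ _ => le_refl 0, fun _ => ⟨le_refl 0, zero_le_one⟩⟩
    have hone : (fun _ : Fin n => (1 : ℝ)) ∈ alcove τ :=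
      ⟨fun _ _ _ => le_refl 1, fun _ => ⟨zero_le_one, le_refl 1⟩⟩
    have hf0 := hmem _ hzero
    have hf1 := hmem _ hone
    -- minimal elements: q a = 0
    have hqmin : ∀ a, MinR r a → q a = 0 := by
      intro a hmin
      have h1 := hf0.1 a hmin
      have h2 := hf1.1 a hmin
      simp only [add_zero] at h1
      simp only [] at h2
      have : (q a : ℝ) = 0 := le_antisymm (by linarith [h2.2]) h1.1
      exact_mod_cast this
    -- covers: q b = q a + indicator of descent
    have hqcov : ∀ a b, CovR r a b → q b = q a + (if τ b < τ a then 1 else 0) := by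
      intro a b hab
      have hne : τ a ≠ τ b := fun h => hab.2.1 (τ.injective h)
      have h0 := hf0.2 a b hab
      simp only [add_zero] at h0
      rcases lt_or_gt_of_ne hne with hlt | hgt
      · -- ascent : τ a < τ b, show q b = q a
        have hylem : (fun c => if τ a < τ c then (1 : ℝ) else 0) ∈ alcove τ := by
          constructor
          · intro c d hcd
            dsimp only
            by_cases h : τ a < τ c
            · rw [if_pos h, if_pos (lt_of_lt_of_le h hcd)]
            · rw [if_neg h]; split_ifs <;> norm_num
          · intro c; dsimp only; split_ifs <;> norm_num
        have hf := (hmem _ hylem).2 a b hab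
        simp only [] at hf
        rw [if_pos hlt, if_neg (lt_irrefl (τ a))] at hf
        have hle : (q b : ℝ) ≤ q a := by linarith [hf.2]
        have hge : (q a : ℝ) ≤ q b := by linarith [h0.1]
        have : (q b : ℝ) = q a := le_antisymm hle hge
        have hz : q b = q a := by exact_mod_cast this
        rw [if_neg (not_lt.mpr (le_of_lt hlt))]
        omega
      · -- descent : τ b < τ a, show q b = q a + 1
        have hylem : (fun c => if τ b < τ c then (1 : ℝ) else 0) ∈ alcove τ := by
          constructor
          · intro c d hcd
            dsimp only
            by_cases h : τ b < τ c
            · rw [if_pos h, if_pos (lt_of_lt_of_le h hcd)]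
            · rw [if_neg h]; split_ifs <;> norm_num
          · intro c; dsimp only; split_ifs <;> norm_num
        have hf := (hmem _ hylem).2 a b hab
        simp only [] at hf
        rw [if_pos hgt, if_neg (lt_irrefl (τ b))] at hf
        have hge : (q a : ℝ) + 1 ≤ q b := by linarith [hf.1]
        have hle : (q b : ℝ) ≤ q a + 1 := by linarith [h0.2]
        have hcast : (q b : ℝ) = q a + 1 := le_antisymm hle hge
        have hz : q b = q a + 1 := by exact_mod_cast hcast
        rw [if_pos hgt]
        omega
    -- main claim : along any chain, q = desAlong
    have hmain : ∀ (k : ℕ) (a : Fin n) (c : Fin (k + 1) → Fin n),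
        IsSatChain r k c a → q a = (desAlong τ k c : ℤ) := by
      intro k
      induction k with
      | zero =>
        intro a c hc
        obtain ⟨hmin, _, hlast⟩ := hc
        subst hlast
        have h0 : Fin.last 0 = (0 : Fin 1) := rfl
        rw [h0]
        have hd : desAlong τ 0 c = 0 := by
          simp [desAlong]
        rw [hd, hqmin _ hmin]
        rfl
      | succ k ih =>
        intro a c hc
        obtain ⟨hmin, hcov, hlast⟩ := hc
        set c' : Fin (k + 1) → Fin n := c ∘ Fin.castSucc with hc'
        have hchain' : IsSatChain r k c' (c (Fin.last k).castSucc) := by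
          refine ⟨?_, ?_, rfl⟩
          · simpa [hc'] using hmin
          · intro i
            have := hcov i.castSucc
            rw [Fin.succ_castSucc] at this
            exact this
        have hcovlast : CovR r (c (Fin.last k).castSucc) a := by
          have := hcov (Fin.last k)
          rwa [Fin.succ_last, hlast] at this
        have hq := hqcov _ _ hcovlast
        have hih := ih _ c' hchain'
        rw [hq, hih, desAlong_succ τ c, hlast]
        push_cast
        split_ifs <;> ring
    refine ⟨?_, fun a k c hc => hmain k a c hc⟩
    intro a k₁ k₂ c₁ c₂ h₁ h₂
    have e1 := hmain k₁ a c₁ h₁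
    have e2 := hmain k₂ a c₂ h₂
    omega
  · -- backward direction
    rintro ⟨-, hq⟩ x ⟨y, hy, rfl⟩
    obtain ⟨hmono, hbd⟩ := hy
    constructor
    · intro a hmin
      have hqa : q a = 0 := by
        have := hq a 0 (fun _ => a) ⟨hmin, fun i => i.elim0, rfl⟩
        simpa [desAlong] using this
      have := hbd a
      simp only [hqa]
      push_cast
      constructor <;> linarith [this.1, this.2]
    · intro a b hab
      obtain ⟨k, c, hc⟩ := chain_exists r hnat a
      have hqa := hq a k c hc
      have hqb := hq b (k + 1) (Fin.snoc c b) (snoc_chain r hc hab)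
      rw [desAlong_snoc τ c b, hc.2.2] at hqb
      have hne : τ a ≠ τ b := fun h => hab.2.1 (τ.injective h)
      have hya := hbd a
      have hyb := hbd b
      rcases lt_or_gt_of_ne hne with hlt | hgt
      · have hyab : y a ≤ y b := hmono a b (le_of_lt hlt)
        rw [if_neg (not_lt.mpr (le_of_lt hlt))] at hqb
        have hqeq : q b = q a := by omega
        simp only []
        rw [hqeq]
        push_cast
        constructor <;> linarith [hya.1, hyb.2]
      · have hyab : y b ≤ y a := hmono b a (le_of_lt hgt)
        rw [if_pos hgt] at hqb
        have hqeq : q b = q a + 1 := by omega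
        simp only []
        rw [hqeq]
        push_cast
        constructor <;> linarith [hya.2, hyb.1]
end

section
/- Let P be a connected finite poset on n elements. Every permutation of {1,...,n} is descent-compatible with P if and only if P is a rooted tree. -/
section Aux

variable {n : ℕ} {r : Fin n → Fin n → Prop}

lemma chain_rel (hrefl : ∀ a, r a a) (htrans : ∀ a b c, r a b → r b c → r a c)
    {k : ℕ} {c : Fin (k + 1) → Fin n} {a : Fin n} (hc : IsSatChain r k c a)
    (i : Fin (k + 1)) : r (c i) a := by
  obtain ⟨-, hcov, hlast⟩ := hc
  have key : ∀ t : ℕ, ∀ i : Fin (k + 1), ∀ hik : i.val + t ≤ k,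
      r (c i) (c ⟨i.val + t, by omega⟩) := by
    intro t
    induction t with
    | zero =>
      intro i hik
      have e : (⟨i.val + 0, by omega⟩ : Fin (k + 1)) = i := by ext; simp
      rw [e]; exact hrefl _
    | succ t ih =>
      intro i hik
      have h1 := ih i (by omega)
      have h2 := (hcov ⟨i.val + t, by omega⟩).1
      have e1 : (Fin.castSucc (⟨i.val + t, by omega⟩ : Fin k)) =
          (⟨i.val + t, by omega⟩ : Fin (k + 1)) := by ext; simp
      have e2 : (Fin.succ (⟨i.val + t, by omega⟩ : Fin k)) =
          (⟨i.val + (t + 1), by omega⟩ : Fin (k + 1)) := by ext; simp; omega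
      rw [e1, e2] at h2
      exact htrans _ _ _ h1 h2
  have h := key (k - i.val) i (by omega)
  have e : (⟨i.val + (k - i.val), by omega⟩ : Fin (k + 1)) = Fin.last k := by
    ext; simp [Fin.last]; omega
  rwa [e, hlast] at h

lemma chain_snoc {k : ℕ} {c : Fin (k + 1) → Fin n} {a b : Fin n}
    (hc : IsSatChain r k c a) (hab : CovR r a b) :
    IsSatChain r (k + 1) (Fin.snoc c b) b := by
  obtain ⟨hmin, hcov, hlast⟩ := hc
  refine ⟨?_, ?_, ?_⟩
  · have e : (0 : Fin (k + 2)) = Fin.castSucc (0 : Fin (k + 1)) := by ext; simp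
    rw [e, Fin.snoc_castSucc]; exact hmin
  · intro i
    rw [Fin.snoc_castSucc]
    by_cases hi : i.val < k
    · have e : (i.succ : Fin (k + 2)) = Fin.castSucc (⟨i.val + 1, by omega⟩ : Fin (k + 1)) := by
        ext; simp
      rw [e, Fin.snoc_castSucc]
      have hcov' := hcov ⟨i.val, hi⟩
      have e1 : Fin.castSucc (⟨i.val, hi⟩ : Fin k) = i := by ext; simp
      have e2 : Fin.succ (⟨i.val, hi⟩ : Fin k) = (⟨i.val + 1, by omega⟩ : Fin (k + 1)) := by
        ext; simp
      rwa [e1, e2] at hcov'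
    · have hik : i = Fin.last k := by ext; simp [Fin.last]; omega
      subst hik
      have e : (Fin.last k).succ = Fin.last (k + 1) := by ext; simp [Fin.last]
      rw [e, Fin.snoc_last, hlast]
      exact hab
  · rw [Fin.snoc_last]

lemma exists_cover (hnat : ∀ a b, r a b → a ≤ b) {b : Fin n}
    (hx : ∃ x, r x b ∧ x ≠ b) : ∃ a, CovR r a b := by
  classical
  obtain ⟨x, hxb, hxne⟩ := hx
  set s : Finset (Fin n) := Finset.univ.filter fun y => r y b ∧ y ≠ b with hs
  have hsne : s.Nonempty := ⟨x, by simp [hs, hxb, hxne]⟩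
  obtain ⟨a, has, hmax⟩ := s.exists_max_image id hsne
  simp only [hs, Finset.mem_filter, Finset.mem_univ, true_and, id] at has hmax
  refine ⟨a, has.1, has.2, ?_⟩
  intro c hac hcb
  by_cases hcb' : c = b
  · exact Or.inr hcb'
  · exact Or.inl (le_antisymm (hmax c ⟨hcb, hcb'⟩) (hnat _ _ hac))

lemma exists_chain (hnat : ∀ a b, r a b → a ≤ b) (a : Fin n) :
    ∃ k, ∃ c : Fin (k + 1) → Fin n, IsSatChain r k c a := by
  have main : ∀ m : ℕ, ∀ a : Fin n, a.val < m →
      ∃ k, ∃ c : Fin (k + 1) → Fin n, IsSatChain r k c a := by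
    intro m
    induction m with
    | zero => intro a h; exact absurd h (Nat.not_lt_zero _)
    | succ m ih =>
      intro a ha
      by_cases hmin : MinR r a
      · exact ⟨0, fun _ => a, hmin, fun i => i.elim0, rfl⟩
      · have hx : ∃ x, r x a ∧ x ≠ a := by
          by_contra hc
          push_neg at hc
          exact hmin hc
        obtain ⟨p, hp⟩ := exists_cover hnat hx
        have hpa : p < a := lt_of_le_of_ne (hnat _ _ hp.1) hp.2.1
        have : p.val < m := by
          have := (Fin.lt_def).mp hpa; omega
        obtain ⟨k, c, hc⟩ := ih p this
        exact ⟨k + 1, Fin.snoc c a, chain_snoc hc hp⟩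
  exact main (a.val + 1) a (Nat.lt_succ_self _)

lemma chain_restrict {m : ℕ} {c : Fin (m + 2) → Fin n} {a : Fin n}
    (hc : IsSatChain r (m + 1) c a) :
    IsSatChain r m (fun j => c j.castSucc) (c (Fin.castSucc (Fin.last m))) := by
  obtain ⟨hmin, hcov, hlast⟩ := hc
  refine ⟨?_, ?_, rfl⟩
  · show MinR r (c (Fin.castSucc 0))
    have e : Fin.castSucc (0 : Fin (m + 1)) = 0 := by ext; simp
    rw [e]; exact hmin
  · intro i
    show CovR r (c (Fin.castSucc (Fin.castSucc i))) (c (Fin.castSucc (Fin.succ i)))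
    have e : Fin.castSucc (Fin.succ i) = Fin.succ (Fin.castSucc i) := by ext; simp
    rw [e]
    exact hcov i.castSucc

lemma chain_unique (hnat : ∀ a b, r a b → a ≤ b)
    (hyp : ∀ b, MinR r b ∨ ∃! a, CovR r a b) (a : Fin n)
    (k₁ k₂ : ℕ) (c₁ : Fin (k₁ + 1) → Fin n) (c₂ : Fin (k₂ + 1) → Fin n)
    (h₁ : IsSatChain r k₁ c₁ a) (h₂ : IsSatChain r k₂ c₂ a) :
    k₁ = k₂ ∧ ∀ (i : ℕ) (hi₁ : i < k₁ + 1) (hi₂ : i < k₂ + 1),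
      c₁ ⟨i, hi₁⟩ = c₂ ⟨i, hi₂⟩ := by
  have main : ∀ m : ℕ, ∀ a : Fin n, a.val < m →
      ∀ (k₁ k₂ : ℕ) (c₁ : Fin (k₁ + 1) → Fin n) (c₂ : Fin (k₂ + 1) → Fin n),
      IsSatChain r k₁ c₁ a → IsSatChain r k₂ c₂ a →
      k₁ = k₂ ∧ ∀ (i : ℕ) (hi₁ : i < k₁ + 1) (hi₂ : i < k₂ + 1),
        c₁ ⟨i, hi₁⟩ = c₂ ⟨i, hi₂⟩ := by
    intro m
    induction m with
    | zero => intro a h; exact absurd h (Nat.not_lt_zero _)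
    | succ m ih =>
      intro a ha k₁ k₂ c₁ c₂ h₁ h₂
      rcases hyp a with hmin | ⟨p, hp, hpu⟩
      · have len : ∀ k (c : Fin (k + 1) → Fin n), IsSatChain r k c a → k = 0 := by
          intro k c hc
          by_contra hk
          obtain ⟨m', rfl⟩ : ∃ m', k = m' + 1 := ⟨k - 1, by omega⟩
          have hcov := hc.2.1 (Fin.last m')
          have e : Fin.succ (Fin.last m') = Fin.last (m' + 1) := by ext; simp [Fin.last]
          rw [e, hc.2.2] at hcov
          exact hcov.2.1 (hmin _ hcov.1)
        have hk₁ := len k₁ c₁ h₁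
        have hk₂ := len k₂ c₂ h₂
        subst hk₁; subst hk₂
        refine ⟨rfl, ?_⟩
        intro i hi₁ hi₂
        obtain rfl : i = 0 := by omega
        exact h₁.2.2.trans h₂.2.2.symm
      · have hnotmin : ¬ MinR r a := fun hm => hp.2.1 (hm p hp.1)
        have len : ∀ k (c : Fin (k + 1) → Fin n), IsSatChain r k c a → k ≠ 0 := by
          intro k c hc hk
          subst hk
          have h0 := hc.1
          have e : (0 : Fin 1) = Fin.last 0 := by ext; simp [Fin.last]
          rw [e, hc.2.2] at h0
          exact hnotmin h0
        have hk₁ := len k₁ c₁ h₁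
        have hk₂ := len k₂ c₂ h₂
        obtain ⟨m₁, rfl⟩ : ∃ m₁, k₁ = m₁ + 1 := ⟨k₁ - 1, by omega⟩
        obtain ⟨m₂, rfl⟩ : ∃ m₂, k₂ = m₂ + 1 := ⟨k₂ - 1, by omega⟩
        -- last covers equal p
        have ep₁ : c₁ (Fin.castSucc (Fin.last m₁)) = p := by
          have hcov := h₁.2.1 (Fin.last m₁)
          have e : Fin.succ (Fin.last m₁) = Fin.last (m₁ + 1) := by ext; simp [Fin.last]
          rw [e, h₁.2.2] at hcov
          exact hpu _ hcov
        have ep₂ : c₂ (Fin.castSucc (Fin.last m₂)) = p := by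
          have hcov := h₂.2.1 (Fin.last m₂)
          have e : Fin.succ (Fin.last m₂) = Fin.last (m₂ + 1) := by ext; simp [Fin.last]
          rw [e, h₂.2.2] at hcov
          exact hpu _ hcov
        have r₁ := chain_restrict h₁
        have r₂ := chain_restrict h₂
        rw [ep₁] at r₁
        rw [ep₂] at r₂
        have hpm : p.val < m := by
          have : p < a := lt_of_le_of_ne (hnat _ _ hp.1) hp.2.1
          have := (Fin.lt_def).mp this; omega
        obtain ⟨hm, hpw⟩ := ih p hpm m₁ m₂ _ _ r₁ r₂
        subst hm
        refine ⟨rfl, ?_⟩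
        intro i hi₁ hi₂
        by_cases hi : i < m₁ + 1
        · have := hpw i hi hi
          have e1 : Fin.castSucc (⟨i, hi⟩ : Fin (m₁ + 1)) = (⟨i, hi₁⟩ : Fin (m₁ + 2)) := by
            ext; simp
          have e2 : Fin.castSucc (⟨i, hi⟩ : Fin (m₁ + 1)) = (⟨i, hi₂⟩ : Fin (m₁ + 2)) := by
            ext; simp
          rw [e1] at this
          rw [← e2, e1] at this
          exact this
        · have hieq : i = m₁ + 1 := by omega
          subst hieq
          exact h₁.2.2.trans h₂.2.2.symm
  exact main (a.val + 1) a (Nat.lt_succ_self _) k₁ k₂ c₁ c₂ h₁ h₂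

lemma not_two_covers (hrefl : ∀ a, r a a) (hantisymm : ∀ a b, r a b → r b a → a = b)
    (htrans : ∀ a b c, r a b → r b c → r a c) (hnat : ∀ a b, r a b → a ≤ b)
    (H : ∀ τ : Equiv.Perm (Fin n), DescentCompatible r τ)
    {b a₁ a₂ : Fin n} (h₁ : CovR r a₁ b) (h₂ : CovR r a₂ b) (hlt : a₁ < a₂) : False := by
  classical
  obtain ⟨k₁, c₁, hc₁⟩ := exists_chain hnat a₁
  obtain ⟨k₂, c₂, hc₂⟩ := exists_chain hnat a₂
  have hd₁ := chain_snoc hc₁ h₁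
  have hd₂ := chain_snoc hc₂ h₂
  set τ := Equiv.swap a₂ b with hτ
  have heq := H τ b (k₁ + 1) (k₂ + 1) _ _ hd₁ hd₂
  have hba₂ : a₂ < b := lt_of_le_of_ne (hnat _ _ h₂.1) h₂.2.1
  have ha₁b : a₁ ≠ b := h₁.2.1
  have ha₁a₂ : a₁ ≠ a₂ := ne_of_lt hlt
  have hne : ∀ i : Fin (k₁ + 1), c₁ i ≠ a₂ ∧ c₁ i ≠ b := by
    intro i
    have hra : r (c₁ i) a₁ := chain_rel hrefl htrans hc₁ i
    constructor
    · intro hEq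
      rw [hEq] at hra
      rcases h₂.2.2 a₁ hra h₁.1 with h | h
      · exact ha₁a₂ h
      · exact ha₁b h
    · intro hEq
      rw [hEq] at hra
      exact ha₁b (hantisymm _ _ h₁.1 hra)
  have hτfix : ∀ i : Fin (k₁ + 1), τ (c₁ i) = c₁ i := fun i =>
    Equiv.swap_apply_of_ne_of_ne (hne i).1 (hne i).2
  have d0 : desAlong τ (k₁ + 1) (Fin.snoc c₁ b) = 0 := by
    rw [desAlong, Finset.card_eq_zero, Finset.filter_eq_empty_iff]
    intro i _
    rw [Fin.snoc_castSucc]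
    by_cases hi : i.val < k₁
    · have e : (i.succ : Fin (k₁ + 2)) = Fin.castSucc (⟨i.val + 1, by omega⟩ : Fin (k₁ + 1)) := by
        ext; simp
      rw [e, Fin.snoc_castSucc]
      have hcov := hc₁.2.1 ⟨i.val, hi⟩
      have e1 : Fin.castSucc (⟨i.val, hi⟩ : Fin k₁) = i := by ext; simp
      have e2 : Fin.succ (⟨i.val, hi⟩ : Fin k₁) = (⟨i.val + 1, by omega⟩ : Fin (k₁ + 1)) := by
        ext; simp
      rw [e1, e2] at hcov
      have hle : c₁ i ≤ c₁ ⟨i.val + 1, by omega⟩ := hnat _ _ hcov.1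
      rw [hτfix, hτfix]
      exact not_lt.mpr hle
    · have hik : i = Fin.last k₁ := by ext; simp [Fin.last]; omega
      subst hik
      have e : (Fin.last k₁).succ = Fin.last (k₁ + 1) := by ext; simp [Fin.last]
      rw [e, Fin.snoc_last, hτfix, hc₁.2.2]
      rw [hτ, Equiv.swap_apply_right]
      exact not_lt.mpr (le_of_lt hlt)
  have d1 : desAlong τ (k₂ + 1) (Fin.snoc c₂ b) ≠ 0 := by
    rw [desAlong]
    apply Finset.card_ne_zero_of_mem (a := Fin.last k₂)
    simp only [Finset.mem_filter, Finset.mem_univ, true_and]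
    have e : (Fin.last k₂).succ = Fin.last (k₂ + 1) := by ext; simp [Fin.last]
    rw [e, Fin.snoc_last, Fin.snoc_castSucc, hc₂.2.2]
    rw [hτ, Equiv.swap_apply_right, Equiv.swap_apply_left]
    exact hba₂
  omega

end Aux

/-- For a connected naturally labeled poset on `Fin n`, all permutations are
descent-compatible iff `P` is a rooted tree, i.e. every element is minimal
(unique parent `0̂` in `P̂`) or has a unique lower cover in `P`. -/
theorem all_descent_compatible_iff_rooted_tree {n : ℕ} (r : Fin n → Fin n → Prop)
    (hrefl : ∀ a, r a a) (hantisymm : ∀ a b, r a b → r b a → a = b)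
    (htrans : ∀ a b c, r a b → r b c → r a c)
    (hnat : ∀ a b, r a b → a ≤ b)
    (hconn : ∀ a b : Fin n, Relation.ReflTransGen (fun x y => r x y ∨ r y x) a b) :
    (∀ τ : Equiv.Perm (Fin n), DescentCompatible r τ) ↔
      (∀ b : Fin n, MinR r b ∨ ∃! a : Fin n, CovR r a b) := by
  constructor
  · intro H b
    by_cases hmin : MinR r b
    · exact Or.inl hmin
    · right
      have hx : ∃ x, r x b ∧ x ≠ b := by
        by_contra hc
        push_neg at hc
        exact hmin hc
      obtain ⟨a, ha⟩ := exists_cover hnat hx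
      refine ⟨a, ha, ?_⟩
      intro a' ha'
      rcases lt_trichotomy a' a with h | h | h
      · exact (not_two_covers hrefl hantisymm htrans hnat H ha' ha h).elim
      · exact h
      · exact (not_two_covers hrefl hantisymm htrans hnat H ha ha' h).elim
  · intro hyp τ a k₁ k₂ c₁ c₂ h₁ h₂
    obtain ⟨hk, hpw⟩ := chain_unique hnat hyp a k₁ k₂ c₁ c₂ h₁ h₂
    subst hk
    have hceq : c₁ = c₂ := funext fun i => by
      have := hpw i.val i.isLt i.isLt
      simpa using this
    rw [hceq]
end

section
/- Every full-dimensional alcoved polytope P ⊂ ℝ^n admits a unique point q₀ ∈ P minimizing every strictly positive linear functional simultaneously; consequently P ⊆ q₀ + ℝ^n_{≥0}. -/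
/-- The translated alcove `q + Δ_τ` for `q ∈ ℤ^n`. -/
def alcoveT {n : ℕ} (τ : Equiv.Perm (Fin n)) (q : Fin n → ℤ) : Set (Fin n → ℝ) :=
  {x | ∃ y ∈ alcove τ, x = fun a => (q a : ℝ) + y a}

/-- Every full-dimensional alcoved polytope (a convex set that is the union of a
nonempty finite family of alcoves) has a unique point `q₀` minimizing every
strictly positive linear functional; consequently `S ⊆ q₀ + ℝ^n_{≥0}`. -/
theorem alcoved_polytope_min_point {n : ℕ} (S : Set (Fin n → ℝ))
    (hconv : Convex ℝ S)
    (halc : ∃ A : Finset ((Fin n → ℤ) × Equiv.Perm (Fin n)),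
      A.Nonempty ∧ S = ⋃ p ∈ A, alcoveT p.2 p.1) :
    ∃! q₀ : Fin n → ℝ, q₀ ∈ S ∧
      (∀ ℓ : (Fin n → ℝ) →ₗ[ℝ] ℝ,
        (∀ p : Fin n → ℝ, (∀ i, 0 ≤ p i) → p ≠ 0 → 0 < ℓ p) →
        ∀ x ∈ S, ℓ q₀ ≤ ℓ x) ∧
      S ⊆ {x | ∀ i, q₀ i ≤ x i} := by
  obtain ⟨A, hA, hS⟩ := halc
  obtain ⟨p₀, hp₀A, hp₀min⟩ := A.exists_min_image (fun p => ∑ j, p.1 j) hA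
  set q₀ : Fin n → ℝ := fun i => (p₀.1 i : ℝ) with hq₀def
  have hq₀S : q₀ ∈ S := by
    rw [hS]
    refine Set.mem_biUnion hp₀A ?_
    exact ⟨0, ⟨fun a b _ => le_refl 0, fun a => ⟨le_refl 0, zero_le_one⟩⟩,
      by funext a; simp [q₀]⟩
  have hsub : ∀ x ∈ S, ∀ i, q₀ i ≤ x i := by
    intro x hx i
    by_contra hlt
    push_neg at hlt
    set T : ℝ := ∑ j, |x j - q₀ j| with hT
    have hT0 : 0 ≤ T := Finset.sum_nonneg fun j _ => abs_nonneg _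
    set t : ℝ := 1 / (1 + T) with ht
    have ht0 : 0 < t := by positivity
    have ht1 : t ≤ 1 := by
      rw [ht, div_le_one (by linarith)]; linarith
    have hbound : ∀ j, t * |x j - q₀ j| < 1 := by
      intro j
      have h1 : |x j - q₀ j| ≤ T :=
        Finset.single_le_sum (f := fun j => |x j - q₀ j|)
          (fun j _ => abs_nonneg _) (Finset.mem_univ j)
      have h2 : t * |x j - q₀ j| ≤ t * T :=
        mul_le_mul_of_nonneg_left h1 ht0.le
      have h3 : t * T < 1 := by
        rw [ht, div_mul_eq_mul_div, one_mul, div_lt_one (by linarith)]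
        linarith
      linarith
    set z : Fin n → ℝ := fun j => q₀ j + t * (x j - q₀ j) with hz
    have hzS : z ∈ S := by
      have h := hconv hq₀S hx (by linarith : (0:ℝ) ≤ 1 - t) ht0.le (by ring)
      convert h using 1
      funext j
      simp only [z, Pi.add_apply, Pi.smul_apply, smul_eq_mul]
      ring
    rw [hS] at hzS
    simp only [Set.mem_iUnion, alcoveT, Set.mem_setOf_eq] at hzS
    obtain ⟨p, hpA, y, hy, hzy⟩ := hzS
    have hyb : ∀ j, 0 ≤ y j ∧ y j ≤ 1 := hy.2
    have hzj : ∀ j, (p.1 j : ℝ) ≤ z j ∧ z j ≤ (p.1 j : ℝ) + 1 := by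
      intro j
      have := congrFun hzy j
      have hb := hyb j
      constructor <;> simp only [this] <;> linarith [hb.1, hb.2]
    -- each coordinate of p.1 is ≤ p₀.1
    have hle : ∀ j, p.1 j ≤ p₀.1 j := by
      intro j
      have h1 : (p.1 j : ℝ) ≤ z j := (hzj j).1
      have h2 : z j < q₀ j + 1 := by
        have := hbound j
        have := le_abs_self (x j - q₀ j)
        have h3 : t * (x j - q₀ j) ≤ t * |x j - q₀ j| :=
          mul_le_mul_of_nonneg_left (le_abs_self _) ht0.le
        simp only [hz]
        linarith [hbound j]
      have : (p.1 j : ℝ) < (p₀.1 j : ℝ) + 1 := by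
        simp only [hq₀def] at h2; linarith
      have : p.1 j < p₀.1 j + 1 := by exact_mod_cast this
      omega
    -- in fact p.1 i = p₀.1 i
    have heq : p.1 i = p₀.1 i := by
      by_contra hne
      have hlt' : p.1 i < p₀.1 i := lt_of_le_of_ne (hle i) hne
      have hsum : ∑ j, p.1 j < ∑ j, p₀.1 j :=
        Finset.sum_lt_sum (fun j _ => hle j) ⟨i, Finset.mem_univ i, hlt'⟩
      have := hp₀min p hpA
      omega
    -- contradiction at coordinate i
    have h1 : (p.1 i : ℝ) ≤ z i := (hzj i).1
    have h2 : z i < q₀ i := by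
      have hneg : t * (x i - q₀ i) < 0 :=
        mul_neg_of_pos_of_neg ht0 (by linarith)
      simp only [hz]; linarith
    rw [heq] at h1
    simp only [hq₀def] at h2
    linarith
  refine ⟨q₀, ⟨hq₀S, ?_, fun x hx i => hsub x hx i⟩, ?_⟩
  · intro ℓ hℓ x hx
    by_cases hxe : x = q₀
    · rw [hxe]
    · have hpos : ∀ i, 0 ≤ (x - q₀) i := by
        intro i
        simp only [Pi.sub_apply]
        linarith [hsub x hx i]
      have hne : x - q₀ ≠ 0 := sub_ne_zero.mpr hxe
      have h0 : 0 < ℓ (x - q₀) := hℓ _ hpos hne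
      have hmap : ℓ (x - q₀) = ℓ x - ℓ q₀ := ℓ.map_sub x q₀
      linarith
  · rintro q₁ ⟨hq₁S, _, hq₁sub⟩
    funext i
    exact le_antisymm (hq₁sub hq₀S i) (hsub q₁ hq₁S i)
end

section
/- Let w = (1/(n+1))(1,2,...,n), τ ∈ S_n, and q ∈ ℤ^n_{≥0} (with q₀ := 0, τ⁻¹(0) := 0). The facet-defining inequalities of q + Δ_τ violated by w are exactly: for 0 ≤ i < n, the inequality x_{τ⁻¹(i)} ≤ x_{τ⁻¹(i+1)} when either (τ⁻¹(i) < τ⁻¹(i+1) and q_{τ⁻¹(i)} < q_{τ⁻¹(i+1)}) or (τ⁻¹(i) > τ⁻¹(i+1) and q_{τ⁻¹(i)} ≤ q_{τ⁻¹(i+1)}); the top inequality x_{τ⁻¹(n)} ≤ 1 of q + Δ_τ is never violated by w. -/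
/-- The coordinates of `w - q` arranged along `τ⁻¹`: position `0` is the phantom
coordinate `x₀ = 0`, and position `i ∈ {1,…,n}` carries
`(w - q)_{τ⁻¹(i)} = τ⁻¹(i)/(n+1) - q_{τ⁻¹(i)}`, where `w = (1/(n+1))(1,…,n)`. -/
noncomputable def wqVal (n : ℕ) (τ : Equiv.Perm (Fin n)) (q : Fin n → ℤ) : Fin (n + 1) → ℝ :=
  Fin.cases 0 fun j : Fin n =>
    (((τ.symm j : ℕ) : ℝ) + 1) / ((n : ℝ) + 1) - (q (τ.symm j) : ℝ)

/-- The label `τ⁻¹(i) ∈ {0,…,n}` at position `i`, with the convention `τ⁻¹(0) = 0`. -/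
def invLabel (n : ℕ) (τ : Equiv.Perm (Fin n)) : Fin (n + 1) → ℕ :=
  Fin.cases 0 fun j : Fin n => (τ.symm j : ℕ) + 1

/-- The value `q_{τ⁻¹(i)}` at position `i`, with the convention `q₀ = 0`. -/
def qLabel (n : ℕ) (τ : Equiv.Perm (Fin n)) (q : Fin n → ℤ) : Fin (n + 1) → ℤ :=
  Fin.cases 0 fun j : Fin n => q (τ.symm j)

lemma wqVal_eq (n : ℕ) (τ : Equiv.Perm (Fin n)) (q : Fin n → ℤ) (p : Fin (n+1)) :
    wqVal n τ q p = (invLabel n τ p : ℝ) / ((n:ℝ)+1) - (qLabel n τ q p : ℝ) := by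
  induction p using Fin.cases with
  | zero => simp [wqVal, invLabel, qLabel]
  | succ j => simp [wqVal, invLabel, qLabel]

lemma invLabel_le (n : ℕ) (τ : Equiv.Perm (Fin n)) (p : Fin (n+1)) :
    invLabel n τ p ≤ n := by
  induction p using Fin.cases with
  | zero => simp [invLabel]
  | succ j =>
    have := (τ.symm j).is_lt
    simp only [invLabel, Fin.cases_succ]
    omega

lemma invLabel_inj (n : ℕ) (τ : Equiv.Perm (Fin n)) :
    Function.Injective (invLabel n τ) := by
  intro a b
  induction a using Fin.cases with
  | zero =>
    induction b using Fin.cases with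
    | zero => intro _; rfl
    | succ j => simp [invLabel]
  | succ i =>
    induction b using Fin.cases with
    | zero => simp [invLabel]
    | succ j =>
      simp only [invLabel, Fin.cases_succ]
      intro h
      have : τ.symm i = τ.symm j := Fin.ext (by omega)
      have := τ.symm.injective this
      rw [this]

lemma key_int (N A₁ A₂ B₁ B₂ : ℤ) (hne : A₁ ≠ A₂) (h1 : 0 ≤ A₁) (h2 : A₁ ≤ N)
    (h3 : 0 ≤ A₂) (h4 : A₂ ≤ N) :
    (A₂ - (N+1)*B₂ < A₁ - (N+1)*B₁) ↔ ((A₁ < A₂ ∧ B₁ < B₂) ∨ (A₂ < A₁ ∧ B₁ ≤ B₂)) := by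
  have hms : (N+1)*(B₂ - B₁) = (N+1)*B₂ - (N+1)*B₁ := mul_sub _ _ _
  constructor
  · intro h
    rcases lt_or_gt_of_ne hne with hlt | hgt
    · left
      refine ⟨hlt, ?_⟩
      by_contra hb
      push_neg at hb
      have : (N+1)*(B₂ - B₁) ≤ 0 := mul_nonpos_of_nonneg_of_nonpos (by omega) (by omega)
      linarith
    · right
      refine ⟨hgt, ?_⟩
      by_contra hb
      push_neg at hb
      have : (N+1)*(B₂ - B₁) ≤ (N+1)*(-1) := mul_le_mul_of_nonneg_left (by omega) (by omega)
      linarith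
  · rintro (⟨ha, hb⟩ | ⟨ha, hb⟩)
    · have : (N+1)*1 ≤ (N+1)*(B₂-B₁) := mul_le_mul_of_nonneg_left (by omega) (by omega)
      linarith
    · have : (N+1)*0 ≤ (N+1)*(B₂-B₁) := mul_le_mul_of_nonneg_left (by omega) (by omega)
      linarith

/-- For `w = (1/(n+1))(1,…,n)` and `q ∈ ℤ^n_{≥0}`: the inequality
`x_{τ⁻¹(i)} ≤ x_{τ⁻¹(i+1)}` of `q + Δ_τ` is violated by `w` exactly when
(`τ⁻¹(i) < τ⁻¹(i+1)` and `q_{τ⁻¹(i)} < q_{τ⁻¹(i+1)}`) or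
(`τ⁻¹(i) > τ⁻¹(i+1)` and `q_{τ⁻¹(i)} ≤ q_{τ⁻¹(i+1)}`);
and the top inequality `x_{τ⁻¹(n)} ≤ 1` is never violated by `w`. -/
theorem halfopen_alcove_violations (n : ℕ) (τ : Equiv.Perm (Fin n))
    (q : Fin n → ℤ) (hq : ∀ i, 0 ≤ q i) :
    (∀ i : Fin n,
      (wqVal n τ q i.succ < wqVal n τ q i.castSucc ↔
        ((invLabel n τ i.castSucc < invLabel n τ i.succ ∧
            qLabel n τ q i.castSucc < qLabel n τ q i.succ) ∨
          (invLabel n τ i.succ < invLabel n τ i.castSucc ∧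
            qLabel n τ q i.castSucc ≤ qLabel n τ q i.succ)))) ∧
    wqVal n τ q (Fin.last n) ≤ 1 := by
  have hpos : (0:ℝ) < (n:ℝ) + 1 := by positivity
  constructor
  · intro i
    rw [wqVal_eq, wqVal_eq]
    have hne : ((invLabel n τ i.castSucc : ℤ)) ≠ (invLabel n τ i.succ : ℤ) := by
      intro h
      exact (show i.castSucc < i.succ from Fin.castSucc_lt_succ).ne (invLabel_inj n τ (by exact_mod_cast h))
    have hstep : ((invLabel n τ i.succ : ℝ)) / ((n:ℝ)+1) - (qLabel n τ q i.succ : ℝ) <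
        ((invLabel n τ i.castSucc : ℝ)) / ((n:ℝ)+1) - (qLabel n τ q i.castSucc : ℝ) ↔
        ((invLabel n τ i.succ : ℤ) - ((n:ℤ)+1) * qLabel n τ q i.succ <
          (invLabel n τ i.castSucc : ℤ) - ((n:ℤ)+1) * qLabel n τ q i.castSucc) := by
      have e : ∀ (A : ℕ) (B : ℤ), (A:ℝ)/((n:ℝ)+1) - (B:ℝ) =
          (((A:ℤ) - ((n:ℤ)+1)*B : ℤ):ℝ)/((n:ℝ)+1) := by
        intro A B
        field_simp
        try push_cast
        try ring
      rw [e, e, div_lt_div_iff_of_pos_right hpos]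
      exact Int.cast_lt
    rw [hstep, key_int ((n:ℤ)) _ _ _ _ hne
      (by positivity) (by exact_mod_cast invLabel_le n τ i.castSucc)
      (by positivity) (by exact_mod_cast invLabel_le n τ i.succ)]
    constructor
    · rintro (⟨h1, h2⟩ | ⟨h1, h2⟩)
      · exact Or.inl ⟨by exact_mod_cast h1, h2⟩
      · exact Or.inr ⟨by exact_mod_cast h1, h2⟩
    · rintro (⟨h1, h2⟩ | ⟨h1, h2⟩)
      · exact Or.inl ⟨by exact_mod_cast h1, h2⟩
      · exact Or.inr ⟨by exact_mod_cast h1, h2⟩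
  · induction (Fin.last n) using Fin.cases with
    | zero => simp [wqVal]
    | succ j =>
      simp only [wqVal, Fin.cases_succ]
      have h1 : ((τ.symm j : ℕ) : ℝ) + 1 ≤ (n:ℝ) := by
        exact_mod_cast (τ.symm j).is_lt
      have h2 : (0:ℝ) ≤ (q (τ.symm j) : ℝ) := by exact_mod_cast hq _
      have h3 : ((((τ.symm j : ℕ)):ℝ) + 1) / ((n:ℝ)+1) ≤ 1 := by
        rw [div_le_one hpos]; linarith
      linarith
end

section
/- Let P be the chain 1 < 2 < ... < n, τ ∈ S_n, and q^τ ∈ ℤ^n with q^τ_i equal to the number of descents in the word τ(1)τ(2)...τ(i) (with q^τ_0 = 0, counting a descent at position 0 if τ(1) > τ(0) fails, i.e., descents of 0τ(1)...τ(i)). Then for 0 ≤ i < n: (a) if τ⁻¹(i+1) < τ⁻¹(i) then q^τ_{τ⁻¹(i+1)} < q^τ_{τ⁻¹(i)}; (b) if τ⁻¹(i+1) > τ⁻¹(i) then q^τ_{τ⁻¹(i)} ≤ q^τ_{τ⁻¹(i+1)}, with equality if and only if τ⁻¹(i+1) = τ⁻¹(i) + 1. -/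
/-- The word `0 τ(1) τ(2) ⋯ τ(n)`: position `0` carries the letter `0`, and
position `i ∈ {1,…,n}` carries the letter `τ(i) ∈ {1,…,n}`. -/
def word (n : ℕ) (τ : Equiv.Perm (Fin n)) : Fin (n + 1) → ℕ :=
  Fin.cases 0 fun j : Fin n => (τ j : ℕ) + 1

/-- `qdes n τ m` is the number of descents in the word `0 τ(1) ⋯ τ(m)`. -/
def qdes (n : ℕ) (τ : Equiv.Perm (Fin n)) (m : ℕ) : ℕ :=
  (Finset.univ.filter fun j : Fin n =>
    (j : ℕ) + 1 ≤ m ∧ word n τ j.succ < word n τ j.castSucc).card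

lemma word_injective (n : ℕ) (τ : Equiv.Perm (Fin n)) : Function.Injective (word n τ) := by
  intro p q h
  induction p using Fin.cases with
  | zero => induction q using Fin.cases <;> simp [word] at h ⊢
  | succ p =>
    induction q using Fin.cases with
    | zero => simp [word] at h
    | succ q => simp [word, Fin.val_eq_val, τ.injective.eq_iff] at h; simp [h]

lemma invLabel_lt (n : ℕ) (τ : Equiv.Perm (Fin n)) (v : Fin (n+1)) :
    invLabel n τ v < n + 1 := by
  induction v using Fin.cases <;> simp [invLabel]

lemma word_invLabel (n : ℕ) (τ : Equiv.Perm (Fin n)) (v : Fin (n+1))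
    (h : invLabel n τ v < n + 1) :
    word n τ ⟨invLabel n τ v, h⟩ = (v : ℕ) := by
  induction v using Fin.cases with
  | zero => simp [invLabel, word]
  | succ j =>
    simp only [invLabel, Fin.cases_succ]
    simp [word, Fin.cases_succ']

lemma chain_mono (n : ℕ) (τ : Equiv.Perm (Fin n)) (a b : ℕ)
    (H : ∀ j : Fin n, a ≤ (j:ℕ) → (j:ℕ)+1 ≤ b →
      word n τ j.castSucc ≤ word n τ j.succ) :
    ∀ (p q : ℕ) (hp : p < n+1) (hq : q < n+1), a ≤ p → q ≤ b → p ≤ q →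
      word n τ ⟨p, hp⟩ ≤ word n τ ⟨q, hq⟩ := by
  intro p q
  induction q with
  | zero =>
    intro hp hq hap hqb hpq
    have hp0 : p = 0 := by omega
    subst hp0
    exact le_of_eq (congrArg _ (Fin.ext rfl))
  | succ k ih =>
    intro hp hq hap hqb hpq
    rcases Nat.lt_or_ge p (k+1) with h | h
    · have hk : k < n+1 := by omega
      have hkn : k < n := by omega
      have step : word n τ ⟨k, hk⟩ ≤ word n τ ⟨k+1, hq⟩ := by
        have := H ⟨k, hkn⟩ (by simpa using le_trans hap (by omega)) (by simpa using hqb)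
        simpa [Fin.castSucc, Fin.succ, Fin.castAdd, Fin.castLE] using this
      exact le_trans (ih hp hk hap (by omega) (by omega)) step
    · have : p = k+1 := by omega
      subst this
      exact le_of_eq (congrArg _ (Fin.ext rfl))

lemma qdes_mono (n : ℕ) (τ : Equiv.Perm (Fin n)) {a b : ℕ} (hab : a ≤ b) :
    qdes n τ a ≤ qdes n τ b := by
  apply Finset.card_le_card
  intro j hj
  simp only [Finset.mem_filter, Finset.mem_univ, true_and] at hj ⊢
  exact ⟨le_trans hj.1 hab, hj.2⟩

lemma qdes_lt (n : ℕ) (τ : Equiv.Perm (Fin n)) {a b : ℕ} (hab : a ≤ b) (j₀ : Fin n)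
    (h1 : a ≤ (j₀:ℕ)) (h2 : (j₀:ℕ)+1 ≤ b)
    (hd : word n τ j₀.succ < word n τ j₀.castSucc) : qdes n τ a < qdes n τ b := by
  apply Finset.card_lt_card
  constructor
  · intro j hj
    simp only [Finset.mem_filter, Finset.mem_univ, true_and] at hj ⊢
    exact ⟨le_trans hj.1 hab, hj.2⟩
  · intro hsub
    have := hsub (by simp only [Finset.mem_filter, Finset.mem_univ, true_and]; exact ⟨h2, hd⟩)
    simp only [Finset.mem_filter, Finset.mem_univ, true_and] at this
    omega

/-- On the chain `1 < ⋯ < n` with `q^τ_i` the number of descents of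
`0 τ(1) ⋯ τ(i)`, for `0 ≤ i < n`:
(a) if `τ⁻¹(i+1) < τ⁻¹(i)` then `q^τ_{τ⁻¹(i+1)} < q^τ_{τ⁻¹(i)}`;
(b) if `τ⁻¹(i) < τ⁻¹(i+1)` then `q^τ_{τ⁻¹(i)} ≤ q^τ_{τ⁻¹(i+1)}`, with equality
iff `τ⁻¹(i+1) = τ⁻¹(i) + 1`. -/
theorem chain_descent_statistics (n : ℕ) (τ : Equiv.Perm (Fin n)) :
    ∀ i : Fin n,
      (invLabel n τ i.succ < invLabel n τ i.castSucc →
        qdes n τ (invLabel n τ i.succ) < qdes n τ (invLabel n τ i.castSucc)) ∧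
      (invLabel n τ i.castSucc < invLabel n τ i.succ →
        (qdes n τ (invLabel n τ i.castSucc) ≤ qdes n τ (invLabel n τ i.succ) ∧
          (qdes n τ (invLabel n τ i.castSucc) = qdes n τ (invLabel n τ i.succ) ↔
            invLabel n τ i.succ = invLabel n τ i.castSucc + 1))) := by
  intro i
  set a := invLabel n τ i.castSucc with ha_def
  set b := invLabel n τ i.succ with hb_def
  have ha : a < n + 1 := invLabel_lt n τ _
  have hb : b < n + 1 := invLabel_lt n τ _
  have wa : word n τ ⟨a, ha⟩ = (i : ℕ) := by
    have := word_invLabel n τ i.castSucc ha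
    simpa using this
  have wb : word n τ ⟨b, hb⟩ = (i : ℕ) + 1 := by
    have := word_invLabel n τ i.succ hb
    simpa using this
  constructor
  · -- case (a): b < a
    intro hba
    have hdesc : ∃ j : Fin n, b ≤ (j:ℕ) ∧ (j:ℕ)+1 ≤ a ∧
        word n τ j.succ < word n τ j.castSucc := by
      by_contra hno
      push_neg at hno
      have := chain_mono n τ b a (fun j h1 h2 => hno j h1 h2) b a hb ha
        le_rfl le_rfl (le_of_lt hba)
      rw [wa, wb] at this
      omega
    obtain ⟨j₀, h1, h2, hd⟩ := hdesc
    exact qdes_lt n τ (le_of_lt hba) j₀ h1 h2 hd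
  · -- case (b): a < b
    intro hab
    refine ⟨qdes_mono n τ (le_of_lt hab), ?_, ?_⟩
    · -- equality → b = a + 1
      intro heq
      by_contra hne
      have hb2 : a + 1 < b := by omega
      have hno : ∀ j : Fin n, a ≤ (j:ℕ) → (j:ℕ)+1 ≤ b →
          word n τ j.castSucc ≤ word n τ j.succ := by
        intro j h1 h2
        by_contra hlt
        push_neg at hlt
        have := qdes_lt n τ (le_of_lt hab) j h1 h2 hlt
        omega
      have hm1 : word n τ ⟨a, ha⟩ ≤ word n τ ⟨a+1, by omega⟩ :=
        chain_mono n τ a b hno a (a+1) ha (by omega) le_rfl (by omega) (by omega)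
      have hm2 : word n τ ⟨a+1, by omega⟩ ≤ word n τ ⟨b, hb⟩ :=
        chain_mono n τ a b hno (a+1) b (by omega) hb (by omega) le_rfl (by omega)
      have hne1 : word n τ ⟨a+1, by omega⟩ ≠ (i : ℕ) := by
        intro h
        have := word_injective n τ (h.trans wa.symm)
        have := congrArg Fin.val this
        simp at this
      have hne2 : word n τ ⟨a+1, by omega⟩ ≠ (i : ℕ) + 1 := by
        intro h
        have := word_injective n τ (h.trans wb.symm)
        have := congrArg Fin.val this
        simp at this
        omega
      rw [wa] at hm1
      rw [wb] at hm2
      omega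
    · -- b = a + 1 → equality
      intro hb1
      apply le_antisymm (qdes_mono n τ (by omega))
      apply Finset.card_le_card
      intro j hj
      simp only [Finset.mem_filter, Finset.mem_univ, true_and] at hj ⊢
      refine ⟨?_, hj.2⟩
      rcases Nat.lt_or_ge ((j:ℕ)+1) b with h | h
      · omega
      · exfalso
        have hja : (j:ℕ) = a := by omega
        have e1 : j.succ = (⟨b, hb⟩ : Fin (n+1)) := Fin.ext (by simp; omega)
        have e2 : j.castSucc = (⟨a, ha⟩ : Fin (n+1)) := Fin.ext (by simp; omega)
        have := hj.2
        rw [e1, e2, wa, wb] at this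
        omega
end

section
/- If P is a poset such that P̂ is ranked with rank function ρ, then Lip(P) is centrally symmetric with respect to ρ: ρ - Lip(P) = Lip(P). -/
lemma lip_mem_aux {α : Type*} [PartialOrder α]
    (ρ : α → ℕ) (hmin : ∀ a : α, IsMin a → ρ a = 1)
    (hcov : ∀ a b : α, a ⋖ b → ρ b = ρ a + 1)
    {f : α → ℝ} (hf : f ∈ Lip α) :
    (fun a => (ρ a : ℝ) - f a) ∈ Lip α := by
  obtain ⟨h1, h2⟩ := hf
  constructor
  · intro a ha
    have := h1 a ha
    dsimp only
    rw [hmin a ha]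
    push_cast
    constructor <;> linarith [this.1, this.2]
  · intro a b hab
    have := h2 a b hab
    have hr : (ρ b : ℝ) = ρ a + 1 := by rw [hcov a b hab]; push_cast; ring
    dsimp only
    constructor <;> linarith [this.1, this.2]

/-- If `P̂` is ranked with rank function `ρ` (so `ρ a = 1` for minimal `a` and
`ρ b = ρ a + 1` for covers `a ⋖ b`), then `Lip(P)` is centrally symmetric with
respect to `ρ`: `ρ - Lip(P) = Lip(P)`. -/
theorem lip_centrally_symmetric {α : Type*} [PartialOrder α] [Fintype α]
    (ρ : α → ℕ) (hmin : ∀ a : α, IsMin a → ρ a = 1)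
    (hcov : ∀ a b : α, a ⋖ b → ρ b = ρ a + 1) :
    (fun f : α → ℝ => fun a => (ρ a : ℝ) - f a) '' Lip α = Lip α := by
  ext f
  constructor
  · rintro ⟨g, hg, rfl⟩
    exact lip_mem_aux ρ hmin hcov hg
  · intro hf
    exact ⟨fun a => (ρ a : ℝ) - f a, lip_mem_aux ρ hmin hcov hf, by funext a; ring⟩
end

section
/- If P is a poset such that P̂ is ranked with rank function ρ, then the rank function ρ (restricted to P) is the unique integer point in the interior of 2·Lip(P). -/
open Pointwise
lemma smul_lip_eq (α : Type*) [PartialOrder α] :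
    (2 : ℝ) • Lip α = {f | (∀ a, IsMin a → 0 ≤ f a ∧ f a ≤ 2) ∧
       ∀ a b : α, a ⋖ b → 0 ≤ f b - f a ∧ f b - f a ≤ 2} := by
  ext f
  constructor
  · rintro ⟨h, ⟨h1, h2⟩, rfl⟩
    constructor
    · intro a ha
      have := h1 a ha
      simp only [Pi.smul_apply, smul_eq_mul]
      constructor <;> linarith [this.1, this.2]
    · intro a b hab
      have := h2 a b hab
      simp only [Pi.smul_apply, smul_eq_mul]
      constructor <;> linarith [this.1, this.2]
  · rintro ⟨h1, h2⟩
    refine ⟨(2 : ℝ)⁻¹ • f, ⟨?_, ?_⟩, smul_inv_smul₀ two_ne_zero f⟩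
    · intro a ha
      have := h1 a ha
      simp only [Pi.smul_apply, smul_eq_mul]
      constructor <;> linarith [this.1, this.2]
    · intro a b hab
      have := h2 a b hab
      simp only [Pi.smul_apply, smul_eq_mul]
      constructor <;> linarith [this.1, this.2]

/-- If `P̂` is ranked with rank function `ρ`, then `ρ` is the unique integer
point in the interior of `2 · Lip(P)`. -/
theorem rank_unique_interior_point {α : Type*} [PartialOrder α] [Fintype α]
    (ρ : α → ℕ) (hmin : ∀ a : α, IsMin a → ρ a = 1)
    (hcov : ∀ a b : α, a ⋖ b → ρ b = ρ a + 1) :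
    (fun a => (ρ a : ℝ)) ∈ interior ((2 : ℝ) • Lip α) ∧
    ∀ g ∈ interior ((2 : ℝ) • Lip α),
      (∀ a, ∃ z : ℤ, g a = (z : ℝ)) → g = fun a => (ρ a : ℝ) := by
  classical
  rw [smul_lip_eq]
  set S : Set (α → ℝ) := {f | (∀ a, IsMin a → 0 ≤ f a ∧ f a ≤ 2) ∧
       ∀ a b : α, a ⋖ b → 0 ≤ f b - f a ∧ f b - f a ≤ 2} with hS
  -- the open strict-inequality set
  set U : Set (α → ℝ) := {f | (∀ a, IsMin a → 0 < f a ∧ f a < 2) ∧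
       ∀ a b : α, a ⋖ b → 0 < f b - f a ∧ f b - f a < 2} with hU
  have hUopen : IsOpen U := by
    have : U = (⋂ a ∈ {a : α | IsMin a}, {f : α → ℝ | f a ∈ Set.Ioo (0:ℝ) 2}) ∩
        ⋂ p ∈ {p : α × α | p.1 ⋖ p.2}, {f : α → ℝ | f p.2 - f p.1 ∈ Set.Ioo (0:ℝ) 2} := by
      ext f
      simp only [hU, Set.mem_setOf_eq, Set.mem_inter_iff, Set.mem_iInter, Set.mem_Ioo,
        Prod.forall]
      try tauto
    rw [this]
    apply IsOpen.inter
    · exact (Set.toFinite _).isOpen_biInter fun a _ =>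
        isOpen_Ioo.preimage (continuous_apply a)
    · exact (Set.toFinite _).isOpen_biInter fun p _ =>
        isOpen_Ioo.preimage ((continuous_apply p.2).sub (continuous_apply p.1))
  have hUS : U ⊆ S := by
    rintro f ⟨h1, h2⟩
    exact ⟨fun a ha => ⟨(h1 a ha).1.le, (h1 a ha).2.le⟩,
      fun a b hab => ⟨(h2 a b hab).1.le, (h2 a b hab).2.le⟩⟩
  constructor
  · apply interior_maximal hUS hUopen
    constructor
    · intro a ha
      show 0 < (ρ a : ℝ) ∧ (ρ a : ℝ) < 2
      rw [hmin a ha]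
      norm_num
    · intro a b hab
      show 0 < (ρ b : ℝ) - ρ a ∧ (ρ b : ℝ) - ρ a < 2
      rw [hcov a b hab]
      push_cast
      norm_num
  · intro g hg hz
    -- g is in the interior: extract strict inequalities
    obtain ⟨ε, hε, hball⟩ := Metric.isOpen_iff.mp isOpen_interior g hg
    have hballS : Metric.ball g ε ⊆ S := hball.trans interior_subset
    have hgS : g ∈ S := interior_subset hg
    have hpert : ∀ (v : α → ℝ), (∀ a, |v a| < ε) → g + v ∈ S := by
      intro v hv
      apply hballS
      rw [Metric.mem_ball, dist_pi_lt_iff hε]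
      intro i
      rw [Real.dist_eq]
      simpa using hv i
    set δ := ε / 2 with hδ
    have hδpos : 0 < δ := by positivity
    have hδlt : δ < ε := by linarith
    have habs : ∀ a b : α, |(fun c => if c = a then -δ else 0 : α → ℝ) b| < ε := by
      intro a b
      rcases eq_or_ne b a with rfl | h
      · simp [abs_of_nonneg hδpos.le, hδlt]
      · simp [h, hε]
    have habs' : ∀ a b : α, |(fun c => if c = a then δ else 0 : α → ℝ) b| < ε := by
      intro a b
      rcases eq_or_ne b a with rfl | h
      · simp [abs_of_nonneg hδpos.le, hδlt]
      · simp [h, hε]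
    -- strict inequalities for g
    have hstrict_min : ∀ a, IsMin a → 0 < g a ∧ g a < 2 := by
      intro a ha
      constructor
      · have := (hpert _ (habs a)).1 a ha |>.1
        simp at this
        linarith
      · have := (hpert _ (habs' a)).1 a ha |>.2
        simp at this
        linarith
    have hstrict_cov : ∀ a b, a ⋖ b → 0 < g b - g a ∧ g b - g a < 2 := by
      intro a b hab
      have hne : b ≠ a := hab.lt.ne'
      constructor
      · have := (hpert _ (habs b)).2 a b hab |>.1
        simp [Ne.symm hne] at this
        linarith
      · have := (hpert _ (habs' b)).2 a b hab |>.2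
        simp [Ne.symm hne] at this
        linarith
    -- integer + strict inequalities ⇒ exact values
    have hg_min : ∀ a, IsMin a → g a = 1 := by
      intro a ha
      obtain ⟨z, hz_a⟩ := hz a
      have h1 := (hstrict_min a ha).1
      have h2 := (hstrict_min a ha).2
      rw [hz_a] at h1 h2 ⊢
      have : (0:ℝ) < z := h1
      have : (z:ℝ) < 2 := h2
      have hz1 : z = 1 := by
        have h1' : (0:ℤ) < z := by exact_mod_cast h1
        have h2' : z < 2 := by exact_mod_cast h2
        omega
      rw [hz1]; norm_num
    have hg_cov : ∀ a b, a ⋖ b → g b = g a + 1 := by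
      intro a b hab
      obtain ⟨za, hza⟩ := hz a
      obtain ⟨zb, hzb⟩ := hz b
      have h1 := (hstrict_cov a b hab).1
      have h2 := (hstrict_cov a b hab).2
      rw [hza, hzb] at h1 h2 ⊢
      have h1' : za < zb := by
        have : (za:ℝ) < zb := by linarith
        exact_mod_cast this
      have h2' : zb < za + 2 := by
        have : (zb:ℝ) < za + 2 := by linarith
        exact_mod_cast this
      have : zb = za + 1 := by omega
      rw [this]; push_cast; ring
    -- conclude by well-founded induction
    have key : ∀ a : α, g a = (ρ a : ℝ) := by
      intro a
      induction a using WellFoundedLT.induction with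
      | _ a ih =>
        by_cases ha : IsMin a
        · rw [hg_min a ha, hmin a ha]; norm_num
        · obtain ⟨b, hba⟩ : ∃ b, b < a := by
            simp only [IsMin, not_forall] at ha
            obtain ⟨b, hb1, hb2⟩ := ha
            exact ⟨b, lt_of_le_not_ge hb1 hb2⟩
          obtain ⟨c, _, hc⟩ := exists_le_covBy_of_lt hba
          rw [hg_cov c a hc, hcov c a hc, ih c hc.lt]
          push_cast; ring
    funext a
    exact key a
end

section
/- Let P be a poset such that P̂ is ranked with rank function ρ. Then Lip(P) = K(P) ∩ (ρ - K(P)), where K(P) is the order cone of nonnegative isotone functions on P. -/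
/-- The order cone of nonnegative isotone functions on `α`. -/
def orderCone (α : Type*) [PartialOrder α] : Set (α → ℝ) :=
  {f | (∀ a, 0 ≤ f a) ∧ ∀ a b : α, a ≤ b → f a ≤ f b}

/-- Monotonicity follows from monotonicity along covers in a finite poset. -/
lemma mono_of_covBy {α : Type*} [PartialOrder α] [Fintype α] {f : α → ℝ}
    (h : ∀ a b : α, a ⋖ b → f a ≤ f b) : ∀ a b : α, a ≤ b → f a ≤ f b := by
  classical
  letI : LocallyFiniteOrder α := Fintype.toLocallyFiniteOrder
  intro a
  induction a using WellFoundedGT.induction with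
  | _ a ih =>
    intro b hab
    rcases eq_or_lt_of_le hab with rfl | hlt
    · exact le_refl _
    · obtain ⟨x, hax, hxb⟩ := exists_covBy_le_of_lt hlt
      exact le_trans (h a x hax) (ih x hax.lt b hxb)

/-- Nonnegativity on minimal elements plus cover increments propagate upward. -/
lemma nonneg_of_covBy {α : Type*} [PartialOrder α] [Fintype α] {f : α → ℝ}
    (hm : ∀ a : α, IsMin a → 0 ≤ f a)
    (h : ∀ a b : α, a ⋖ b → f a ≤ f b) : ∀ a : α, 0 ≤ f a := by
  intro a
  induction a using WellFoundedLT.induction with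
  | _ a ih =>
    by_cases hmin : IsMin a
    · exact hm a hmin
    · obtain ⟨b, hb⟩ := exists_covBy_of_wellFoundedGT hmin
      exact le_trans (ih b hb.lt) (h b a hb)

/-- If `P̂` is ranked with rank function `ρ`, then `Lip(P) = K(P) ∩ (ρ - K(P))`. -/
theorem lip_eq_cone_inter_reflected_cone {α : Type*} [PartialOrder α] [Fintype α]
    (ρ : α → ℕ) (hmin : ∀ a : α, IsMin a → ρ a = 1)
    (hcov : ∀ a b : α, a ⋖ b → ρ b = ρ a + 1) :
    Lip α = orderCone α ∩
      ((fun g : α → ℝ => fun a => (ρ a : ℝ) - g a) '' orderCone α) := by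
  ext f
  constructor
  · rintro ⟨h1, h2⟩
    have hfmono : ∀ a b : α, a ≤ b → f a ≤ f b :=
      mono_of_covBy (fun a b hab => by linarith [(h2 a b hab).1])
    have hfnn : ∀ a, 0 ≤ f a :=
      nonneg_of_covBy (fun a ha => (h1 a ha).1) (fun a b hab => by linarith [(h2 a b hab).1])
    set g : α → ℝ := fun a => (ρ a : ℝ) - f a with hg
    have hgcov : ∀ a b : α, a ⋖ b → g a ≤ g b := by
      intro a b hab
      have := (h2 a b hab).2
      have hr : (ρ b : ℝ) = ρ a + 1 := by exact_mod_cast hcov a b hab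
      simp only [hg]; linarith
    have hgmono := mono_of_covBy hgcov
    have hgnn : ∀ a, 0 ≤ g a := by
      refine nonneg_of_covBy (fun a ha => ?_) hgcov
      have := (h1 a ha).2
      have : (ρ a : ℝ) = 1 := by exact_mod_cast hmin a ha
      simp only [hg]; linarith [(h1 a ha).2]
    refine ⟨⟨hfnn, hfmono⟩, g, ⟨hgnn, hgmono⟩, ?_⟩
    funext a; simp [hg]
  · rintro ⟨⟨hfnn, hfmono⟩, g, ⟨hgnn, hgmono⟩, rfl⟩
    constructor
    · intro a ha
      refine ⟨hfnn a, ?_⟩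
      have h1 : (ρ a : ℝ) = 1 := by exact_mod_cast hmin a ha
      have h2 := hgnn a
      show (ρ a : ℝ) - g a ≤ 1
      linarith
    · intro a b hab
      have hr : (ρ b : ℝ) = ρ a + 1 := by exact_mod_cast hcov a b hab
      have h3 : (ρ a : ℝ) - g a ≤ (ρ b : ℝ) - g b := hfmono a b hab.le
      have h1 := hgmono a b hab.le
      constructor <;> simp only <;> linarith
end

section
/- Let P be a poset with unique maximal element 1̂ such that P̂ is ranked with rank function ρ, and let h = height(P) be the number of elements of a maximal chain of P. Then for 1 ≤ k ≤ h, the map f ↦ ρ - f is an affine lattice isomorphism from the (P,k)-hypersimplex Δ(P,k) onto Δ(P, h+1-k). -/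
/-- The `(P,k)`-hypersimplex `Δ(P,k) = {f ∈ Lip(P) : k - 1 ≤ f(1̂) ≤ k}`,
where `m = 1̂` is the maximum of `P`. -/
def hyp (α : Type*) [PartialOrder α] (m : α) (k : ℕ) : Set (α → ℝ) :=
  {f ∈ Lip α | (k : ℝ) - 1 ≤ f m ∧ f m ≤ (k : ℝ)}

lemma hyp_mapsTo {α : Type*} [PartialOrder α]
    (ρ : α → ℕ) (hmin : ∀ a : α, IsMin a → ρ a = 1)
    (hcov : ∀ a b : α, a ⋖ b → ρ b = ρ a + 1)
    (m : α) (k : ℕ) (hk1 : 1 ≤ k) (hk2 : k ≤ ρ m) :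
    Set.MapsTo (fun f : α → ℝ => fun a => (ρ a : ℝ) - f a)
      (hyp α m k) (hyp α m (ρ m + 1 - k)) := by
  rintro f ⟨⟨h1, h2⟩, h3, h4⟩
  have hc : ((ρ m + 1 - k : ℕ) : ℝ) = (ρ m : ℝ) + 1 - (k : ℝ) := by
    push_cast [Nat.cast_sub (by omega : k ≤ ρ m + 1)]; ring
  refine ⟨⟨fun a ha => ?_, fun a b hab => ?_⟩, ?_, ?_⟩
  · have := h1 a ha
    simp only
    rw [hmin a ha]
    constructor <;> push_cast <;> linarith [this.1, this.2]
  · have := h2 a b hab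
    simp only
    rw [hcov a b hab]
    constructor <;> push_cast <;> linarith [this.1, this.2]
  · simp only; rw [hc]; linarith
  · simp only; rw [hc]; linarith

/-- If `P` has maximum `1̂ = m` and `P̂` is ranked with rank function `ρ` (so the
height of `P` is `ρ m`), then for `1 ≤ k ≤ ρ m` the affine map `f ↦ ρ - f` is a
lattice-preserving bijection from `Δ(P,k)` onto `Δ(P, height(P) + 1 - k)`. -/
theorem hypersimplex_symmetry {α : Type*} [PartialOrder α] [Fintype α]
    (ρ : α → ℕ) (hmin : ∀ a : α, IsMin a → ρ a = 1)
    (hcov : ∀ a b : α, a ⋖ b → ρ b = ρ a + 1)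
    (m : α) (hm : ∀ a : α, a ≤ m)
    (k : ℕ) (hk1 : 1 ≤ k) (hk2 : k ≤ ρ m) :
    Set.BijOn (fun f : α → ℝ => fun a => (ρ a : ℝ) - f a)
      (hyp α m k) (hyp α m (ρ m + 1 - k)) ∧
    ∀ f : α → ℝ, (∀ a, ∃ z : ℤ, f a = (z : ℝ)) →
      ∀ a, ∃ z : ℤ, (ρ a : ℝ) - f a = (z : ℝ) := by
  have hk1' : 1 ≤ ρ m + 1 - k := by omega
  have hk2' : ρ m + 1 - k ≤ ρ m := by omega
  have hkk : ρ m + 1 - (ρ m + 1 - k) = k := by omega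
  constructor
  · refine ⟨hyp_mapsTo ρ hmin hcov m k hk1 hk2, ?_, ?_⟩
    · intro f _ g _ hfg
      funext a
      have := congrFun hfg a
      simp only at this
      linarith
    · intro g hg
      refine ⟨fun a => (ρ a : ℝ) - g a, ?_, ?_⟩
      · have := hyp_mapsTo ρ hmin hcov m (ρ m + 1 - k) hk1' hk2' hg
        rwa [hkk] at this
      · funext a; simp
  · intro f hf a
    obtain ⟨z, hz⟩ := hf a
    exact ⟨(ρ a : ℤ) - z, by push_cast [hz]; ring⟩
end
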